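/- arXiv:0909.2030 — 13 statements merged into one kernel-verified Lean document; each statement's English description precedes it below -/
import Mathlib

section
/- Let Q be a conjunctive query over a finite variable set V with body atoms u_1,…,u_m and let Φ be a set of functional dependencies over V. Let s ≥ 0 be a real number such that every Shannon-feasible function h for (Q,Φ) satisfies h(vars(u_0)) ≤ s. Then for every database D over a finite universe that is compatible with Φ, |Q(D)| ≤ rmax(Q,D)^s (as real numbers, using the real power function). -/
/-!
Choose one body-satisfying substitution for each output tuple; this gives a set `T` of
substitutions on which `θ ↦ θ ∘ u₀` is injective. Let `h(S)` be the Shannon entropy of the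
restriction to `S` of a uniformly random element of `T`. Then `h(vars u₀) = log |Q(D)|`,
`h(vars u_j) ≤ log |R_σ(j)| ≤ log rmax`, the functional dependencies hold for `h` because `D` is
compatible with `Φ`, and `h` is monotone and submodular. Submodularity is Gibbs' inequality
`log x ≤ x - 1` applied to the ratios of fiber sizes `n_b n_c / (n_a n_d)`, which a double count
shows to sum to at most `|T|`. So `h / log rmax` is Shannon-feasible and
`log |Q(D)| ≤ s · log rmax`; when `rmax = 1`, every multiple of `h` is feasible, which forces
`|Q(D)| ≤ 1`.
-/

open Finset

lemma sum_log_nonpos_of_sum_le_card {ι : Type*} {s : Finset ι} {y : ι → ℝ}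
    (hy : ∀ i ∈ s, 0 < y i) (hsum : ∑ i ∈ s, y i ≤ #s) : ∑ i ∈ s, Real.log (y i) ≤ 0 :=
  calc ∑ i ∈ s, Real.log (y i) ≤ ∑ i ∈ s, (y i - 1) :=
        sum_le_sum fun i hi => Real.log_le_sub_one_of_pos (hy i hi)
    _ = ∑ i ∈ s, y i - #s := by rw [sum_sub_distrib, sum_const, nsmul_one]
    _ ≤ 0 := sub_nonpos.2 hsum

section Entropy

variable {α β γ : Type*} [DecidableEq β] [DecidableEq γ] {T : Finset α} {g : α → β}
  {g' : α → γ} {t : α}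

def fiberCard (T : Finset α) (g : α → β) (t : α) : ℕ := #{t' ∈ T | g t' = g t}

/-- The Shannon entropy of `g t` for `t` uniform on `T`, written as an average over `T`:
the value `g t` has probability `fiberCard T g t / #T`. -/
noncomputable def entropy (T : Finset α) (g : α → β) : ℝ :=
  Real.log #T - (#T : ℝ)⁻¹ * ∑ t ∈ T, Real.log (fiberCard T g t)

lemma fiberCard_pos (ht : t ∈ T) : 0 < fiberCard T g t :=
  card_pos.2 ⟨t, mem_filter.2 ⟨ht, rfl⟩⟩

lemma fiberCard_le_fiberCard (h : ∀ t ∈ T, ∀ t' ∈ T, g' t = g' t' → g t = g t') (ht : t ∈ T) :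
    fiberCard T g' t ≤ fiberCard T g t :=
  card_le_card fun t' ht' => by
    rw [mem_filter] at ht' ⊢
    exact ⟨ht'.1, h t' ht'.1 t ht ht'.2⟩

lemma fiberCard_eq_of_eq {p : α} (h : g p = g t) : fiberCard T g p = fiberCard T g t := by
  simp only [fiberCard, h]

lemma fiberCard_eq_sum (t : α) :
    (fiberCard T g t : ℝ) = ∑ t' ∈ T, if g t' = g t then 1 else 0 := by
  rw [sum_boole]
  rfl

lemma sum_fiber_inv_fiberCard (ht : t ∈ T) :
    ∑ t' ∈ T with g t' = g t, (fiberCard T g t' : ℝ)⁻¹ = 1 := by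
  rw [sum_congr rfl fun t' ht' => by rw [fiberCard_eq_of_eq (mem_filter.1 ht').2], sum_const,
    nsmul_eq_mul]
  exact mul_inv_cancel₀ (by exact_mod_cast (fiberCard_pos ht).ne')

lemma sum_inv_fiberCard : ∑ t ∈ T, (fiberCard T g t : ℝ)⁻¹ = #(T.image g) := by
  rw [← sum_fiberwise_of_maps_to (fun t ht => mem_image_of_mem g ht), card_eq_sum_ones,
    Nat.cast_sum]
  refine sum_congr rfl fun y hy => ?_
  obtain ⟨t, ht, rfl⟩ := mem_image.1 hy
  simpa using sum_fiber_inv_fiberCard ht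

lemma entropy_mono (h : ∀ t ∈ T, ∀ t' ∈ T, g' t = g' t' → g t = g t') :
    entropy T g ≤ entropy T g' := by
  have hsum : ∑ t ∈ T, Real.log (fiberCard T g' t) ≤ ∑ t ∈ T, Real.log (fiberCard T g t) :=
    sum_le_sum fun t ht => Real.log_le_log (by exact_mod_cast fiberCard_pos ht)
      (by exact_mod_cast fiberCard_le_fiberCard h ht)
  unfold entropy
  gcongr

lemma entropy_congr (h : ∀ t ∈ T, ∀ t' ∈ T, g t = g t' ↔ g' t = g' t') :
    entropy T g = entropy T g' :=
  le_antisymm (entropy_mono fun t ht t' ht' => (h t ht t' ht').2)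
    (entropy_mono fun t ht t' ht' => (h t ht t' ht').1)

lemma entropy_of_subsingleton [Subsingleton β] : entropy T g = 0 := by
  have : ∀ t, fiberCard T g t = #T := fun t => by
    rw [fiberCard, filter_true_of_mem fun _ _ => Subsingleton.elim _ _]
  rcases eq_or_ne (#T : ℝ) 0 with hT | hT <;> simp [entropy, this, hT]

lemma entropy_of_injOn (h : Set.InjOn g T) : entropy T g = Real.log #T := by
  have : ∀ t ∈ T, fiberCard T g t = 1 := fun t ht => by
    rw [fiberCard, card_eq_one]
    refine ⟨t, ext fun t' => ?_⟩
    simp only [mem_filter, mem_singleton]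
    exact ⟨fun ⟨ht', e⟩ => h ht' ht e, by rintro rfl; exact ⟨ht, rfl⟩⟩
  have hsum : ∑ t ∈ T, Real.log (fiberCard T g t) = 0 :=
    sum_eq_zero fun t ht => by simp [this t ht]
  simp [entropy, hsum]

lemma entropy_le_log_card_image : entropy T g ≤ Real.log #(T.image g) := by
  obtain rfl | hT := T.eq_empty_or_nonempty
  · simp [entropy]
  have hN : (0 : ℝ) < #T := by exact_mod_cast hT.card_pos
  have hM : (0 : ℝ) < #(T.image g) := by exact_mod_cast (hT.image g).card_pos
  set N : ℝ := (#T : ℝ)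
  set M : ℝ := (#(T.image g) : ℝ)
  have hn : ∀ t ∈ T, (0 : ℝ) < fiberCard T g t := fun t ht => by exact_mod_cast fiberCard_pos ht
  have hsum : ∑ t ∈ T, N / (M * fiberCard T g t) = N :=
    calc ∑ t ∈ T, N / (M * fiberCard T g t) = N / M * ∑ t ∈ T, (fiberCard T g t : ℝ)⁻¹ := by
          rw [mul_sum]
          exact sum_congr rfl fun t _ => by rw [div_mul_eq_div_div, div_eq_mul_inv]
      _ = N := by rw [sum_inv_fiberCard, div_mul_cancel₀ _ hM.ne']
  have gibbs := sum_log_nonpos_of_sum_le_card (fun t ht => by have := hn t ht; positivity)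
    hsum.le
  rw [sum_congr rfl fun t ht => by rw [Real.log_div hN.ne' (mul_pos hM (hn t ht)).ne',
    Real.log_mul hM.ne' (hn t ht).ne'], sum_sub_distrib, sum_add_distrib, sum_const, sum_const,
    nsmul_eq_mul, nsmul_eq_mul] at gibbs
  rw [entropy, sub_le_comm, le_inv_mul_iff₀ hN, mul_sub]
  linarith

variable {β₁ β₂ β₃ β₄ : Type*} [DecidableEq β₁] [DecidableEq β₂] [DecidableEq β₃]
  [DecidableEq β₄] {a : α → β₁} {b : α → β₂} {c : α → β₃} {d : α → β₄}

section Submodular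

variable (hba : ∀ t ∈ T, ∀ t' ∈ T, b t = b t' → a t = a t')
  (hca : ∀ t ∈ T, ∀ t' ∈ T, c t = c t' → a t = a t')
  (hd : ∀ t ∈ T, ∀ t' ∈ T, d t = d t' ↔ b t = b t' ∧ c t = c t')
include hba hca hd

-- The cell `{t | b t = b p ∧ c t = c q}` is, when nonempty, a single fiber of `d`.
lemma sum_cell_inv_fiberCard_le {p q : α} (hp : p ∈ T) (hq : q ∈ T) :
    ∑ t ∈ T with b p = b t ∧ c q = c t, ((fiberCard T a t : ℝ) * fiberCard T d t)⁻¹ ≤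
      if a q = a p then (fiberCard T a q : ℝ)⁻¹ else 0 := by
  obtain hW | ⟨t₀, ht₀⟩ := (T.filter fun t => b p = b t ∧ c q = c t).eq_empty_or_nonempty
  · rw [hW, sum_empty]
    split_ifs <;> positivity
  obtain ⟨ht₀T, hbt₀, hct₀⟩ := mem_filter.1 ht₀
  have hcell : (T.filter fun t => b p = b t ∧ c q = c t) = T.filter fun t => d t = d t₀ :=
    filter_congr fun t ht => by
      rw [hd t ht t₀ ht₀T, ← hbt₀, ← hct₀, eq_comm (a := b p), eq_comm (a := c q)]
  rw [if_pos ((hca t₀ ht₀T q hq hct₀.symm).symm.trans (hba p hp t₀ ht₀T hbt₀).symm), hcell]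
  apply le_of_eq
  calc ∑ t ∈ T with d t = d t₀, ((fiberCard T a t : ℝ) * fiberCard T d t)⁻¹
      = ∑ t ∈ T with d t = d t₀, (fiberCard T a q : ℝ)⁻¹ * (fiberCard T d t : ℝ)⁻¹ := by
        refine sum_congr rfl fun t ht => ?_
        obtain ⟨htT, hdt⟩ := mem_filter.1 ht
        have hct : c t = c q := ((hd t htT t₀ ht₀T).1 hdt).2.trans hct₀.symm
        rw [mul_inv, fiberCard_eq_of_eq (hca t htT q hq hct)]
    _ = (fiberCard T a q : ℝ)⁻¹ := by rw [← mul_sum, sum_fiber_inv_fiberCard ht₀T, mul_one]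

lemma sum_fiberCard_ratio_le :
    ∑ t ∈ T, (fiberCard T b t * fiberCard T c t : ℝ) / (fiberCard T a t * fiberCard T d t) ≤
      #T := by
  set w : α → ℝ := fun t => ((fiberCard T a t : ℝ) * fiberCard T d t)⁻¹
  have hexpand : ∀ t, (fiberCard T b t * fiberCard T c t : ℝ) /
      (fiberCard T a t * fiberCard T d t) =
      ∑ p ∈ T, ∑ q ∈ T, if b p = b t ∧ c q = c t then w t else 0 := fun t => by
    rw [fiberCard_eq_sum (g := b), fiberCard_eq_sum (g := c), div_eq_mul_inv, sum_mul_sum,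
      sum_mul]
    refine sum_congr rfl fun p _ => ?_
    rw [sum_mul]
    refine sum_congr rfl fun q _ => ?_
    split_ifs <;> simp_all [w]
  calc ∑ t ∈ T, (fiberCard T b t * fiberCard T c t : ℝ) / (fiberCard T a t * fiberCard T d t)
      = ∑ p ∈ T, ∑ q ∈ T, ∑ t ∈ T, if b p = b t ∧ c q = c t then w t else 0 := by
        simp only [hexpand]
        rw [sum_comm]
        exact sum_congr rfl fun _ _ => sum_comm
    _ ≤ ∑ p ∈ T, ∑ q ∈ T, if a q = a p then (fiberCard T a q : ℝ)⁻¹ else 0 := by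
        gcongr with p hp q hq
        rw [← sum_filter]
        exact sum_cell_inv_fiberCard_le hba hca hd hp hq
    _ = ∑ p ∈ T, 1 := sum_congr rfl fun p hp => by rw [← sum_filter, sum_fiber_inv_fiberCard hp]
    _ = #T := by simp

lemma entropy_add_entropy_le : entropy T a + entropy T d ≤ entropy T b + entropy T c := by
  have hpos : ∀ t ∈ T, (0 : ℝ) < fiberCard T a t ∧ (0 : ℝ) < fiberCard T b t ∧
      (0 : ℝ) < fiberCard T c t ∧ (0 : ℝ) < fiberCard T d t := fun t ht => by
    refine ⟨?_, ?_, ?_, ?_⟩ <;> exact_mod_cast fiberCard_pos ht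
  have gibbs := sum_log_nonpos_of_sum_le_card
    (fun t ht => by obtain ⟨_, _, _, _⟩ := hpos t ht; positivity)
    (sum_fiberCard_ratio_le hba hca hd)
  rw [sum_congr rfl fun t ht => by
      obtain ⟨hat, hbt, hct, hdt⟩ := hpos t ht
      rw [Real.log_div (by positivity) (by positivity), Real.log_mul hbt.ne' hct.ne',
        Real.log_mul hat.ne' hdt.ne'],
    sum_sub_distrib, sum_add_distrib, sum_add_distrib] at gibbs
  have := mul_nonpos_of_nonneg_of_nonpos (inv_nonneg.2 (Nat.cast_nonneg (α := ℝ) #T)) gibbs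
  rw [mul_sub, mul_add, mul_add] at this
  simp only [entropy]
  linarith

end Submodular

end Entropy

lemma Finset.restrict_eq_restrict_iff {ι : Type*} {π : ι → Type*} {S : Finset ι}
    {f f' : (i : ι) → π i} : S.restrict f = S.restrict f' ↔ ∀ i ∈ S, f i = f' i := by
  simp [funext_iff]

section Entropic

variable {V U : Type*} [DecidableEq U] {T : Finset (V → U)} {S A B : Finset V}

noncomputable def entropicFn (T : Finset (V → U)) (S : Finset V) : ℝ := entropy T S.restrict

lemma entropicFn_empty : entropicFn T ∅ = 0 := entropy_of_subsingleton

lemma entropicFn_mono (h : S ⊆ A) : entropicFn T S ≤ entropicFn T A :=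
  entropy_mono fun _ _ _ _ e => congrArg (restrict₂ (π := fun _ => U) h) e

variable [DecidableEq V]

lemma entropicFn_insert_eq {y : V}
    (hy : ∀ θ ∈ T, ∀ θ' ∈ T, (∀ x ∈ A, θ x = θ' x) → θ y = θ' y) :
    entropicFn T (insert y A) = entropicFn T A :=
  entropy_congr fun θ hθ θ' hθ' => by
    simp only [restrict_eq_restrict_iff, forall_mem_insert]
    exact ⟨And.right, fun h => ⟨hy θ hθ θ' hθ' h, h⟩⟩

lemma entropicFn_add_entropicFn_union_le (hA : S ⊆ A) (hB : S ⊆ B) :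
    entropicFn T S + entropicFn T (A ∪ B) ≤ entropicFn T A + entropicFn T B :=
  entropy_add_entropy_le (fun _ _ _ _ e => congrArg (restrict₂ (π := fun _ => U) hA) e)
    (fun _ _ _ _ e => congrArg (restrict₂ (π := fun _ => U) hB) e)
    (fun _ _ _ _ => by simp only [restrict_eq_restrict_iff, forall_mem_union])

variable {ι : Type*} [Fintype ι] {u : ι → V}

lemma entropicFn_image_eq_entropy : entropicFn T (univ.image u) = entropy T (· ∘ u) :=
  entropy_congr fun θ _ θ' _ => by simp [funext_iff]

lemma entropicFn_image_eq_log_card (hinj : Set.InjOn (· ∘ u) (T : Set (V → U))) :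
    entropicFn T (univ.image u) = Real.log #T := by
  rw [entropicFn_image_eq_entropy, entropy_of_injOn hinj]

lemma entropicFn_image_le_log_card {R : Finset (ι → U)} (hR : ∀ θ ∈ T, θ ∘ u ∈ R) :
    entropicFn T (univ.image u) ≤ Real.log #R := by
  have hsub : T.image (· ∘ u) ⊆ R := fun _ h => by
    obtain ⟨θ, hθ, rfl⟩ := mem_image.1 h
    exact hR θ hθ
  rw [entropicFn_image_eq_entropy]
  refine entropy_le_log_card_image.trans ?_
  obtain h0 | hpos := (#(T.image (· ∘ u))).eq_zero_or_pos
  · rw [h0, Nat.cast_zero, Real.log_zero]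
    exact Real.log_natCast_nonneg _
  · exact Real.log_le_log (by exact_mod_cast hpos) (by exact_mod_cast card_le_card hsub)

end Entropic

/-- For `L = 1` this is Shannon-feasibility of `h`; the other constraints cut out a cone. -/
structure IsShannonFeasible {V ι : Type*} [Fintype V] [DecidableEq V] (atoms : ι → Finset V)
    (Φ : Set (Finset V × V)) (L : ℝ) (h : Finset V → ℝ) : Prop where
  map_empty : h ∅ = 0
  atom_le : ∀ j, h (atoms j) ≤ L
  fd : ∀ p ∈ Φ, h (insert p.2 p.1) = h p.1
  le_univ : ∀ x : V, 0 ≤ h univ - h ({x} : Finset V)ᶜ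
  submodular : ∀ x y : V, x ≠ y → ∀ S : Finset V, S ⊆ ({x, y} : Finset V)ᶜ →
    0 ≤ h (insert x S) + h (insert y S) - h S - h (insert x (insert y S))

namespace IsShannonFeasible

variable {V ι : Type*} [Fintype V] [DecidableEq V] {atoms : ι → Finset V}
  {Φ : Set (Finset V × V)} {L : ℝ} {h : Finset V → ℝ}

lemma mono_bound (hh : IsShannonFeasible atoms Φ L h) {L' : ℝ} (hL : L ≤ L') :
    IsShannonFeasible atoms Φ L' h :=
  { hh with atom_le := fun j => (hh.atom_le j).trans hL }

lemma const_mul (hh : IsShannonFeasible atoms Φ L h) {c : ℝ} (hc : 0 ≤ c) :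
    IsShannonFeasible atoms Φ (c * L) fun S => c * h S where
  map_empty := by rw [hh.map_empty, mul_zero]
  atom_le j := mul_le_mul_of_nonneg_left (hh.atom_le j) hc
  fd p hp := by rw [hh.fd p hp]
  le_univ x := by rw [← mul_sub]; exact mul_nonneg hc (hh.le_univ x)
  submodular x y hxy S hS := by
    have := mul_nonneg hc (hh.submodular x y hxy S hS)
    linarith

lemma le_mul {s : ℝ} {target : Finset V}
    (hLP : ∀ h, IsShannonFeasible atoms Φ 1 h → h target ≤ s) (hL : 0 ≤ L)
    (hh : IsShannonFeasible atoms Φ L h) : h target ≤ s * L := by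
  obtain hL | rfl := hL.lt_or_eq
  · have := hLP _ (by simpa [inv_mul_cancel₀ hL.ne'] using hh.const_mul (inv_nonneg.2 hL.le))
    rwa [inv_mul_le_iff₀ hL, mul_comm] at this
  · rw [mul_zero]
    by_contra! hpos
    have := hLP _ ((hh.const_mul (c := (|s| + 1) / h target) (by positivity)).mono_bound
      (by rw [mul_zero]; exact zero_le_one))
    rw [div_mul_cancel₀ _ hpos.ne'] at this
    linarith [le_abs_self s]

end IsShannonFeasible

lemma isShannonFeasible_entropicFn {V U ι : Type*} [Fintype V] [DecidableEq V] [DecidableEq U]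
    {T : Finset (V → U)} {atoms : ι → Finset V} {Φ : Set (Finset V × V)} {L : ℝ}
    (hΦ : ∀ p ∈ Φ, ∀ θ ∈ T, ∀ θ' ∈ T, (∀ x ∈ p.1, θ x = θ' x) → θ p.2 = θ' p.2)
    (hatoms : ∀ j, entropicFn T (atoms j) ≤ L) :
    IsShannonFeasible atoms Φ L (entropicFn T) where
  map_empty := entropicFn_empty
  atom_le := hatoms
  fd p hp := entropicFn_insert_eq (hΦ p hp)
  le_univ _ := sub_nonneg.2 (entropicFn_mono (subset_univ _))
  submodular x y _ S _ := by
    have := entropicFn_add_entropicFn_union_le (T := T) (subset_insert x S) (subset_insert y S)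
    rw [insert_union, union_insert, union_self] at this
    linarith

theorem size_bound_of_shannon_LP_general
    {V : Type} [Fintype V] [DecidableEq V]
    {n m : ℕ} (hm : 1 ≤ m)
    {a0 : ℕ} (u0 : Fin a0 → V)
    (ar : Fin n → ℕ) (σ : Fin m → Fin n)
    (u : (j : Fin m) → Fin (ar (σ j)) → V)
    (Φ : Set (Finset V × V))
    (s : ℝ)
    (hLP : ∀ h : Finset V → ℝ,
      h ∅ = 0 →
      (∀ j : Fin m, h (Finset.univ.image (u j)) ≤ 1) →
      (∀ p ∈ Φ, h (insert p.2 p.1) = h p.1) →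
      (∀ x : V, 0 ≤ h Finset.univ - h (({x} : Finset V)ᶜ)) →
      (∀ x y : V, x ≠ y → ∀ S : Finset V, S ⊆ ({x, y} : Finset V)ᶜ →
        0 ≤ h (insert x S) + h (insert y S) - h S - h (insert x (insert y S))) →
      h (Finset.univ.image u0) ≤ s)
    {U : Type} [Fintype U] [DecidableEq U]
    (R : (i : Fin n) → Finset (Fin (ar i) → U))
    (hcompat : ∀ p ∈ Φ, ∀ θ θ' : V → U,
      (∀ j, θ ∘ u j ∈ R (σ j)) → (∀ j, θ' ∘ u j ∈ R (σ j)) →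
      (∀ x ∈ p.1, θ x = θ' x) → θ p.2 = θ' p.2) :
    ((((Finset.univ.filter (fun θ : V → U => ∀ j, θ ∘ u j ∈ R (σ j))).image
        (fun θ => θ ∘ u0)).card : ℕ) : ℝ) ≤
      ((Finset.univ.sup (fun i => (R i).card) : ℕ) : ℝ) ^ s := by
  set F := univ.filter fun θ : V → U => ∀ j, θ ∘ u j ∈ R (σ j)
  set rmax := univ.sup fun i => #(R i)
  obtain ⟨T, hTF, hinj, hTQ⟩ := exists_subset_injOn_image_eq_of_surjOn (F : Set (V → U))
    (F.image (· ∘ u0)) (by rw [coe_image]; exact Set.surjOn_image _ _)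
  rw [← hTQ, card_image_of_injOn hinj]
  obtain rfl | ⟨θ₀, hθ₀⟩ := T.eq_empty_or_nonempty
  · simpa using Real.rpow_nonneg (Nat.cast_nonneg rmax) s
  have hbody : ∀ θ ∈ T, ∀ j, θ ∘ u j ∈ R (σ j) := fun θ hθ => (mem_filter.1 (hTF hθ)).2
  have hR : ∀ j, (#(R (σ j)) : ℝ) ≤ rmax := fun j => by
    exact_mod_cast le_sup (f := fun i => #(R i)) (mem_univ (σ j))
  have hRpos : ∀ j, (0 : ℝ) < #(R (σ j)) := fun j => by
    exact_mod_cast card_pos.2 ⟨_, hbody θ₀ hθ₀ j⟩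
  have hrmax : (1 : ℝ) ≤ rmax := (hR ⟨0, hm⟩).trans' (by exact_mod_cast hRpos ⟨0, hm⟩)
  rw [Real.le_rpow_iff_log_le (by exact_mod_cast card_pos.2 ⟨θ₀, hθ₀⟩) (by linarith),
    ← entropicFn_image_eq_log_card hinj]
  refine IsShannonFeasible.le_mul
    (fun h hh => hLP h hh.map_empty hh.atom_le hh.fd hh.le_univ hh.submodular)
    (Real.log_nonneg hrmax) (isShannonFeasible_entropicFn ?_ fun j => ?_)
  · exact fun p hp θ hθ θ' hθ' => hcompat p hp θ θ' (hbody θ hθ) (hbody θ' hθ')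
  · exact (entropicFn_image_le_log_card (hbody · · j)).trans
      (Real.log_le_log (hRpos j) (hR j))

/-- Let `Q` be a conjunctive query over a finite variable set `V` with output
atom `u0` and body atoms `u j` (each labelled by relation symbol `σ j`), and let `Φ` be a set of
functional dependencies over `V`.  If `s ≥ 0` is a real number such that every Shannon-feasible
function `h` for `(Q, Φ)` satisfies `h (vars u0) ≤ s`, then for every database `D` (over a finite
universe `U`) compatible with `Φ`, `|Q(D)| ≤ rmax(Q,D) ^ s` (real power). -/
theorem size_bound_of_shannon_LP
    {V : Type} [Fintype V] [DecidableEq V]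
    {n m : ℕ} (hm : 1 ≤ m)
    {a0 : ℕ} (u0 : Fin a0 → V)
    (ar : Fin n → ℕ) (σ : Fin m → Fin n)
    (u : (j : Fin m) → Fin (ar (σ j)) → V)
    (Φ : Set (Finset V × V))
    (s : ℝ) (hs : 0 ≤ s)
    (hLP : ∀ h : Finset V → ℝ,
      h ∅ = 0 →
      (∀ j : Fin m, h (Finset.univ.image (u j)) ≤ 1) →
      (∀ p ∈ Φ, h (insert p.2 p.1) = h p.1) →
      (∀ x : V, 0 ≤ h Finset.univ - h (({x} : Finset V)ᶜ)) →
      (∀ x y : V, x ≠ y → ∀ S : Finset V, S ⊆ ({x, y} : Finset V)ᶜ →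
        0 ≤ h (insert x S) + h (insert y S) - h S - h (insert x (insert y S))) →
      h (Finset.univ.image u0) ≤ s)
    {U : Type} [Fintype U] [DecidableEq U]
    (R : (i : Fin n) → Finset (Fin (ar i) → U))
    (hcompat : ∀ p ∈ Φ, ∀ θ θ' : V → U,
      (∀ j, θ ∘ u j ∈ R (σ j)) → (∀ j, θ' ∘ u j ∈ R (σ j)) →
      (∀ x ∈ p.1, θ x = θ' x) → θ p.2 = θ' p.2) :
    ((((Finset.univ.filter (fun θ : V → U => ∀ j, θ ∘ u j ∈ R (σ j))).image
        (fun θ => θ ∘ u0)).card : ℕ) : ℝ) ≤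
      ((Finset.univ.sup (fun i => (R i).card) : ℕ) : ℝ) ^ s :=
  size_bound_of_shannon_LP_general hm u0 ar σ u Φ s hLP R hcompat
end

section
/- Let V be a finite variable set, Φ a set of functional dependencies over V, and let (A,y) ∈ Φ with A = {x_1,…,x_k} and k ≥ 3. Let Z ∉ V, V' := V ∪ {Z}, and Φ' := (Φ \ {(A,y)}) ∪ {({x_1,x_2}, Z), ({Z}, x_1), ({Z}, x_2), ({Z,x_3,…,x_k}, y)}, a set of FDs over V'. Then: (a) for every valid coloring ℒ of (V,Φ), the map ℒ' with ℒ'(Z) := ℒ(x_1) ∪ ℒ(x_2) and ℒ'(x) = ℒ(x) for x ∈ V is a valid coloring of (V',Φ'); moreover ℒ'({x_1,x_2,Z}) = ℒ(x_1) ∪ ℒ(x_2) and ℒ'({Z,x_3,…,x_k,y}) ⊆ ℒ(A); (b) for every valid coloring ℒ' of (V',Φ'), the restriction of ℒ' to V is a valid coloring of (V,Φ). -/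
/-- Reduction of a compound functional dependency `(A, y)` with
`A = {x 0, …, x (k-1)}`, `k ≥ 3`, to dependencies with at most two variables on the left-hand
side, using a fresh variable `Z ∉ V` and
`Φ' := (Φ \ {(A,y)}) ∪ {({x₁,x₂}, Z), ({Z}, x₁), ({Z}, x₂), ({Z,x₃,…,x_k}, y)}`.
(a) Every valid coloring `ℒ` of `(V, Φ)` extends (by `ℒ'(Z) := ℒ(x₁) ∪ ℒ(x₂)`) to a valid
coloring `ℒ'` of `(V ∪ {Z}, Φ')` with `ℒ'({x₁,x₂,Z}) = ℒ(x₁) ∪ ℒ(x₂)` and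
`ℒ'({Z,x₃,…,x_k,y}) ⊆ ℒ(A)`; (b) every valid coloring of `(V ∪ {Z}, Φ')` restricts to a valid
coloring of `(V, Φ)`. -/
theorem fd_compound_lhs_reduction
    {α : Type} [DecidableEq α] {C : Type} [DecidableEq C]
    (V : Finset α) (Φ : Set (Finset α × α))
    (hΦV : ∀ p ∈ Φ, p.1 ⊆ V ∧ p.2 ∈ V)
    (A : Finset α) (y : α) (hAy : (A, y) ∈ Φ)
    (k : ℕ) (hk : 3 ≤ k) (x : Fin k → α) (hxinj : Function.Injective x)
    (hxA : Finset.univ.image x = A)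
    (Z : α) (hZ : Z ∉ V) :
    (∀ ℒ : α → Finset C,
      (∀ p ∈ Φ, ℒ p.2 ⊆ p.1.biUnion ℒ) →
      (let ℒ' := Function.update ℒ Z (ℒ (x ⟨0, by omega⟩) ∪ ℒ (x ⟨1, by omega⟩));
        (∀ p ∈ (Φ \ {(A, y)}) ∪
            {(({x ⟨0, by omega⟩, x ⟨1, by omega⟩} : Finset α), Z),
             (({Z} : Finset α), x ⟨0, by omega⟩),
             (({Z} : Finset α), x ⟨1, by omega⟩),
             (insert Z (A \ {x ⟨0, by omega⟩, x ⟨1, by omega⟩}), y)},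
          ℒ' p.2 ⊆ p.1.biUnion ℒ') ∧
        ({x ⟨0, by omega⟩, x ⟨1, by omega⟩, Z} : Finset α).biUnion ℒ' =
          ℒ (x ⟨0, by omega⟩) ∪ ℒ (x ⟨1, by omega⟩) ∧
        (insert y (insert Z (A \ {x ⟨0, by omega⟩, x ⟨1, by omega⟩}))).biUnion ℒ' ⊆
          A.biUnion ℒ))
    ∧
    (∀ ℒ' : α → Finset C,
      (∀ p ∈ (Φ \ {(A, y)}) ∪
          {(({x ⟨0, by omega⟩, x ⟨1, by omega⟩} : Finset α), Z),
           (({Z} : Finset α), x ⟨0, by omega⟩),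
           (({Z} : Finset α), x ⟨1, by omega⟩),
           (insert Z (A \ {x ⟨0, by omega⟩, x ⟨1, by omega⟩}), y)},
        ℒ' p.2 ⊆ p.1.biUnion ℒ') →
      ∀ p ∈ Φ, ℒ' p.2 ⊆ p.1.biUnion ℒ') := by
  have h0 : (0:ℕ) < k := by omega
  have h1 : (1:ℕ) < k := by omega
  set x0 := x ⟨0, h0⟩ with hx0def
  set x1 := x ⟨1, h1⟩ with hx1def
  have hx0A : x0 ∈ A := by
    rw [← hxA]; exact Finset.mem_image_of_mem x (Finset.mem_univ _)
  have hx1A : x1 ∈ A := by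
    rw [← hxA]; exact Finset.mem_image_of_mem x (Finset.mem_univ _)
  have hAV : A ⊆ V := (hΦV _ hAy).1
  have hyV : y ∈ V := (hΦV _ hAy).2
  have hZy : Z ≠ y := fun h => hZ (h ▸ hyV)
  have hZA : ∀ a ∈ A, a ≠ Z := fun a ha h => hZ (h ▸ hAV ha)
  constructor
  · intro ℒ hL
    intro ℒ'
    have hLZ : ℒ' Z = ℒ x0 ∪ ℒ x1 := Function.update_self _ _ _
    have hLV : ∀ a ∈ V, ℒ' a = ℒ a := by
      intro a ha
      exact Function.update_of_ne (by rintro rfl; exact hZ ha) _ _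
    have hbiV : ∀ S : Finset α, S ⊆ V → S.biUnion ℒ' = S.biUnion ℒ := by
      intro S hS
      exact Finset.biUnion_congr rfl (fun a ha => hLV a (hS ha))
    refine ⟨?_, ?_, ?_⟩
    · intro p hp
      rcases hp with hp | hp
      · have hpV := hΦV p hp.1
        rw [hLV p.2 hpV.2, hbiV p.1 hpV.1]
        exact hL p hp.1
      · simp only [Set.mem_insert_iff, Set.mem_singleton_iff] at hp
        rcases hp with rfl | rfl | rfl | rfl
        · have hsub : ({x0, x1} : Finset α) ⊆ V := by
            intro a ha
            simp only [Finset.mem_insert, Finset.mem_singleton] at ha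
            rcases ha with rfl | rfl
            exacts [hAV hx0A, hAV hx1A]
          show ℒ' Z ⊆ _
          rw [hLZ, hbiV {x0, x1} hsub, Finset.biUnion_insert, Finset.singleton_biUnion]
        · show ℒ' x0 ⊆ _
          rw [hLV x0 (hAV hx0A), Finset.singleton_biUnion, hLZ]
          exact Finset.subset_union_left
        · show ℒ' x1 ⊆ _
          rw [hLV x1 (hAV hx1A), Finset.singleton_biUnion, hLZ]
          exact Finset.subset_union_right
        · show ℒ' y ⊆ _
          rw [hLV y hyV]
          intro c hc
          have hc' := hL (A, y) hAy hc
          rw [Finset.mem_biUnion] at hc'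
          obtain ⟨a, haA, hca⟩ := hc'
          rw [Finset.mem_biUnion]
          by_cases h01 : a = x0 ∨ a = x1
          · refine ⟨Z, Finset.mem_insert_self _ _, ?_⟩
            rw [hLZ, Finset.mem_union]
            rcases h01 with rfl | rfl
            exacts [Or.inl hca, Or.inr hca]
          · push_neg at h01
            refine ⟨a, Finset.mem_insert_of_mem ?_, ?_⟩
            · simp [Finset.mem_sdiff, haA, h01.1, h01.2]
            · rw [hLV a (hAV haA)]; exact hca
    · rw [Finset.biUnion_insert, Finset.biUnion_insert, Finset.singleton_biUnion,
        hLZ, hLV x0 (hAV hx0A), hLV x1 (hAV hx1A)]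
      ext c
      simp only [Finset.mem_union]
      tauto
    · intro c hc
      rw [Finset.mem_biUnion] at hc ⊢
      obtain ⟨a, ha, hca⟩ := hc
      rw [Finset.mem_insert] at ha
      rcases ha with h | ha
      · rw [h, hLV y hyV] at hca
        have := hL (A, y) hAy hca
        rwa [Finset.mem_biUnion] at this
      · rw [Finset.mem_insert] at ha
        rcases ha with rfl | ha
        · rw [hLZ, Finset.mem_union] at hca
          rcases hca with hca | hca
          exacts [⟨x0, hx0A, hca⟩, ⟨x1, hx1A, hca⟩]
        · rw [Finset.mem_sdiff] at ha
          rw [hLV a (hAV ha.1)] at hca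
          exact ⟨a, ha.1, hca⟩
  · intro ℒ' h p hp
    by_cases hpA : p = (A, y)
    · subst hpA
      have h4 := h (insert Z (A \ {x0, x1}), y)
        (Set.mem_union_right _ (by simp))
      have h1' := h (({x0, x1} : Finset α), Z)
        (Set.mem_union_right _ (by simp))
      intro c hc
      have hc' := h4 hc
      rw [Finset.mem_biUnion] at hc'
      obtain ⟨a, ha, hca⟩ := hc'
      rw [Finset.mem_biUnion]
      rw [Finset.mem_insert] at ha
      rcases ha with rfl | ha
      · have := h1' hca
        rw [Finset.mem_biUnion] at this
        obtain ⟨b, hb, hcb⟩ := this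
        simp only [Finset.mem_insert, Finset.mem_singleton] at hb
        rcases hb with rfl | rfl
        exacts [⟨x0, hx0A, hcb⟩, ⟨x1, hx1A, hcb⟩]
      · rw [Finset.mem_sdiff] at ha
        exact ⟨a, ha.1, hca⟩
    · exact h p (Set.mem_union_left _ ⟨hp, hpA⟩)
end

section
/- Let Q be a conjunctive query over a finite variable set V with body atoms u_1,…,u_m and FD set Φ, and let ℒ be a valid coloring of (V,Φ) with r := max_{1≤j≤m} |ℒ(vars(u_j))| > 0. Define h : Finset V → ℝ by h(S) := |ℒ(S)| / r. Then h(∅) = 0, h(vars(u_j)) ≤ 1 for every j ∈ {1,…,m}, h(A ∪ {y}) = h(A) for every (A,y) ∈ Φ, I_h(S) ≥ 0 for every nonempty S ⊆ V, and h(vars(u_0)) = |ℒ(vars(u_0))| / r. -/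
/-- The signed atom measure `I_h(S) := ∑_{T ⊆ S} (−1)^{|T|+1} h(T ∪ (V \ S))`. -/
def signedAtomMeasure {V : Type} [Fintype V] [DecidableEq V]
    (h : Finset V → ℝ) (S : Finset V) : ℝ :=
  ∑ T ∈ S.powerset, (-1 : ℝ) ^ (T.card + 1) * h (T ∪ Sᶜ)


lemma sum_pow_neg_real {α : Type*} [DecidableEq α] (S : Finset α) :
    ∑ T ∈ S.powerset, (-1 : ℝ) ^ T.card = if S = ∅ then 1 else 0 := by
  have := Finset.sum_powerset_neg_one_pow_card (x := S)
  have h2 : ((∑ T ∈ S.powerset, (-1 : ℤ) ^ T.card : ℤ) : ℝ)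
      = ((if S = ∅ then 1 else 0 : ℤ) : ℝ) := congrArg (Int.cast : ℤ → ℝ) this
  push_cast at h2
  exact h2

lemma key {V : Type} [Fintype V] [DecidableEq V] {C : Type} [DecidableEq C]
    (ℒ : V → Finset C) (S : Finset V) (hS : S.Nonempty) :
    0 ≤ ∑ T ∈ S.powerset, (-1:ℝ)^(T.card+1) * (((T ∪ Sᶜ).biUnion ℒ).card : ℝ) := by
  classical
  set K : Finset C := Finset.univ.biUnion ℒ with hK
  have hcard : ∀ T : Finset V, (((T ∪ Sᶜ).biUnion ℒ).card : ℝ)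
      = ∑ c ∈ K, (if c ∈ (T ∪ Sᶜ).biUnion ℒ then (1:ℝ) else 0) := by
    intro T
    rw [Finset.sum_ite_mem]
    have : K ∩ (T ∪ Sᶜ).biUnion ℒ = (T ∪ Sᶜ).biUnion ℒ := by
      apply Finset.inter_eq_right.mpr
      intro c hc
      simp only [hK, Finset.mem_biUnion] at hc ⊢
      obtain ⟨x, _, hx⟩ := hc
      exact ⟨x, Finset.mem_univ x, hx⟩
    rw [this]
    simp
  calc (0:ℝ) ≤ ∑ c ∈ K, ∑ T ∈ S.powerset,
        (-1:ℝ)^(T.card+1) * (if c ∈ (T ∪ Sᶜ).biUnion ℒ then (1:ℝ) else 0) := by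
        apply Finset.sum_nonneg
        intro c _
        set D : Finset V := S.filter (fun x => c ∉ ℒ x) with hD
        have step : ∀ T ∈ S.powerset,
            (-1:ℝ)^(T.card+1) * (if c ∈ (T ∪ Sᶜ).biUnion ℒ then (1:ℝ) else 0)
            = (-1:ℝ)^(T.card+1)
              + (-1:ℝ)^T.card * (if (c ∉ Sᶜ.biUnion ℒ ∧ T ⊆ D) then (1:ℝ) else 0) := by
          intro T hT
          rw [Finset.mem_powerset] at hT
          have hiff : c ∈ (T ∪ Sᶜ).biUnion ℒ ↔ ¬ (c ∉ Sᶜ.biUnion ℒ ∧ T ⊆ D) := by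
            constructor
            · rintro hc ⟨he, hsub⟩
              rw [Finset.mem_biUnion] at hc
              obtain ⟨x, hx, hcx⟩ := hc
              rw [Finset.mem_union] at hx
              rcases hx with hx | hx
              · have := hsub hx
                rw [hD, Finset.mem_filter] at this
                exact this.2 hcx
              · exact he (Finset.mem_biUnion.mpr ⟨x, hx, hcx⟩)
            · intro hne
              by_contra hc
              apply hne
              constructor
              · intro he
                rw [Finset.mem_biUnion] at he
                obtain ⟨x, hx, hcx⟩ := he
                exact hc (Finset.mem_biUnion.mpr ⟨x, Finset.mem_union_right _ hx, hcx⟩)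
              · intro x hx
                rw [hD, Finset.mem_filter]
                refine ⟨hT hx, fun hcx => hc ?_⟩
                exact Finset.mem_biUnion.mpr ⟨x, Finset.mem_union_left _ hx, hcx⟩
          by_cases hp : c ∉ Sᶜ.biUnion ℒ ∧ T ⊆ D
          · rw [if_neg (fun hc => (hiff.mp hc) hp), if_pos hp]
            rw [pow_succ]
            ring
          · rw [if_pos (hiff.mpr hp), if_neg hp]
            ring
        rw [Finset.sum_congr rfl step, Finset.sum_add_distrib]
        have h1 : ∑ T ∈ S.powerset, (-1:ℝ)^(T.card+1) = 0 := by
          have : ∑ T ∈ S.powerset, (-1:ℝ)^(T.card+1)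
              = -∑ T ∈ S.powerset, (-1:ℝ)^T.card := by
            rw [← Finset.sum_neg_distrib]
            apply Finset.sum_congr rfl
            intro T _
            rw [pow_succ]; ring
          rw [this, sum_pow_neg_real, if_neg (Finset.nonempty_iff_ne_empty.mp hS)]
          simp
        rw [h1, zero_add]
        by_cases he : c ∉ Sᶜ.biUnion ℒ
        · have : ∑ T ∈ S.powerset, (-1:ℝ)^T.card * (if (c ∉ Sᶜ.biUnion ℒ ∧ T ⊆ D) then (1:ℝ) else 0)
              = ∑ T ∈ S.powerset.filter (fun T => T ⊆ D), (-1:ℝ)^T.card := by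
            rw [Finset.sum_filter]
            apply Finset.sum_congr rfl
            intro T _
            by_cases hTD : T ⊆ D
            · rw [if_pos ⟨he, hTD⟩, if_pos hTD]; ring
            · rw [if_neg (fun hp => hTD hp.2), if_neg hTD]; ring
          rw [this]
          have hfil : S.powerset.filter (fun T => T ⊆ D) = D.powerset := by
            ext T
            simp only [Finset.mem_filter, Finset.mem_powerset]
            constructor
            · exact fun ⟨_, h2⟩ => h2
            · exact fun hTD => ⟨hTD.trans (Finset.filter_subset _ _), hTD⟩
          rw [hfil, sum_pow_neg_real]
          split <;> norm_num
        · rw [not_not] at he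
          apply le_of_eq
          symm
          apply Finset.sum_eq_zero
          intro T _
          rw [if_neg (fun hp => hp.1 he)]
          ring
    _ = ∑ T ∈ S.powerset, ∑ c ∈ K,
        (-1:ℝ)^(T.card+1) * (if c ∈ (T ∪ Sᶜ).biUnion ℒ then (1:ℝ) else 0) := Finset.sum_comm
    _ = ∑ T ∈ S.powerset, (-1:ℝ)^(T.card+1) * (((T ∪ Sᶜ).biUnion ℒ).card : ℝ) := by
        apply Finset.sum_congr rfl
        intro T _
        rw [hcard T, Finset.mul_sum]

/-- Given a conjunctive query `Q` with body atoms `u 1, …, u m` and FD set `Φ`,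
and a valid coloring `ℒ` of `(V, Φ)` with `r := max_j |ℒ(vars(u j))| > 0`, the function
`h(S) := |ℒ(S)| / r` satisfies `h(∅) = 0`, `h(vars(u j)) ≤ 1` for all body atoms, the FD
equalities `h(A ∪ {y}) = h(A)`, nonnegativity `I_h(S) ≥ 0` of all signed atom measures for
nonempty `S`, and `h(vars(u0)) = |ℒ(vars(u0))| / r`. -/
theorem coloring_gives_feasible_point
    {V : Type} [Fintype V] [DecidableEq V]
    {m : ℕ} (hm : 1 ≤ m)
    {a0 : ℕ} (u0 : Fin a0 → V)
    (a : Fin m → ℕ) (u : (j : Fin m) → Fin (a j) → V)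
    (Φ : Set (Finset V × V))
    {C : Type} [DecidableEq C] (ℒ : V → Finset C)
    (hvalid : ∀ p ∈ Φ, ℒ p.2 ⊆ p.1.biUnion ℒ)
    (r : ℕ)
    (hr : r = Finset.univ.sup (fun j => ((Finset.univ.image (u j)).biUnion ℒ).card))
    (hrpos : 0 < r)
    (h : Finset V → ℝ)
    (hdef : ∀ S : Finset V, h S = ((S.biUnion ℒ).card : ℝ) / r) :
    h ∅ = 0 ∧
    (∀ j : Fin m, h (Finset.univ.image (u j)) ≤ 1) ∧
    (∀ p ∈ Φ, h (insert p.2 p.1) = h p.1) ∧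
    (∀ S : Finset V, S.Nonempty → 0 ≤ signedAtomMeasure h S) ∧
    h (Finset.univ.image u0) = (((Finset.univ.image u0).biUnion ℒ).card : ℝ) / r := by
  have hrR : (0:ℝ) < (r:ℝ) := by exact_mod_cast hrpos
  refine ⟨?_, ?_, ?_, ?_, hdef _⟩
  · rw [hdef]; simp
  · intro j
    rw [hdef]
    rw [div_le_one hrR]
    have : ((Finset.univ.image (u j)).biUnion ℒ).card ≤ r := by
      rw [hr]
      exact Finset.le_sup (f := fun j => ((Finset.univ.image (u j)).biUnion ℒ).card) (Finset.mem_univ j)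
    exact_mod_cast this
  · intro p hp
    rw [hdef, hdef]
    have : (insert p.2 p.1).biUnion ℒ = p.1.biUnion ℒ := by
      rw [Finset.biUnion_insert]
      exact Finset.union_eq_right.mpr (hvalid p hp)
    rw [this]
  · intro S hS
    have heq : signedAtomMeasure h S
        = (∑ T ∈ S.powerset, (-1:ℝ)^(T.card+1) * (((T ∪ Sᶜ).biUnion ℒ).card : ℝ)) / r := by
      unfold signedAtomMeasure
      rw [Finset.sum_div]
      apply Finset.sum_congr rfl
      intro T _
      rw [hdef]
      ring
    rw [heq]
    exact div_nonneg (key ℒ S hS) (le_of_lt hrR)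
end

section
/- Let Q be a conjunctive query over a finite variable set V with body atoms u_1,…,u_m and FD set Φ. Let h : Finset V → ℝ take only rational values, with h(∅) = 0, h(A ∪ {y}) = h(A) for every (A,y) ∈ Φ, and I_h(S) ≥ 0 for every nonempty S ⊆ V. Then there exist a positive integer q, a finite type C of colors, and a valid coloring ℒ : V → Finset C of (V,Φ) such that |ℒ(S)| = q · h(S) for every S ⊆ V. In particular, if additionally h(vars(u_j)) ≤ 1 for every j ∈ {1,…,m}, then |ℒ(vars(u_0))| ≥ h(vars(u_0)) · max_{1≤j≤m} |ℒ(vars(u_j))|. -/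
open Finset

lemma sam_reparam {V : Type} [Fintype V] [DecidableEq V] (h : Finset V → ℝ) (S : Finset V) :
    signedAtomMeasure h S = ∑ U ∈ S.powerset, (-1:ℝ) ^ ((S \ U).card + 1) * h Uᶜ := by
  unfold signedAtomMeasure
  refine Finset.sum_nbij' (fun T => S \ T) (fun U => S \ U) ?_ ?_ ?_ ?_ ?_
  · intro T hT; simp_all [Finset.mem_powerset]
  · intro U hU; simp_all [Finset.mem_powerset]
  · intro T hT; simp only [mem_powerset] at hT; exact Finset.sdiff_sdiff_eq_self hT
  · intro U hU; simp only [mem_powerset] at hU; exact Finset.sdiff_sdiff_eq_self hU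
  · intro T hT
    simp only [mem_powerset] at hT
    rw [Finset.sdiff_sdiff_eq_self hT]
    congr 2
    rw [compl_sdiff, himp_eq, Finset.sup_eq_union]

lemma sum_powerset_sam {V : Type} [Fintype V] [DecidableEq V] (h : Finset V → ℝ) (A : Finset V) :
    ∑ T ∈ A.powerset, signedAtomMeasure h T = -h Aᶜ := by
  simp_rw [sam_reparam]
  have key : ∑ T ∈ A.powerset, ∑ U ∈ T.powerset, (-1:ℝ)^((T\U).card+1) * h Uᶜ
      = ∑ U ∈ A.powerset, ∑ W ∈ (A\U).powerset, (-1:ℝ)^(W.card+1) * h Uᶜ := by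
    rw [Finset.sum_sigma', Finset.sum_sigma']
    refine Finset.sum_nbij' (fun p => ⟨p.2, p.1 \ p.2⟩) (fun p => ⟨p.1 ∪ p.2, p.1⟩) ?_ ?_ ?_ ?_ ?_
    · rintro ⟨T, U⟩ hp
      simp only [Finset.mem_sigma, Finset.mem_powerset] at hp ⊢
      exact ⟨hp.2.trans hp.1, Finset.sdiff_subset_sdiff hp.1 le_rfl⟩
    · rintro ⟨U, W⟩ hp
      simp only [Finset.mem_sigma, Finset.mem_powerset] at hp ⊢
      constructor
      · exact Finset.union_subset hp.1 (hp.2.trans (Finset.sdiff_subset))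
      · exact Finset.subset_union_left
    · rintro ⟨T, U⟩ hp
      simp only [Finset.mem_sigma, Finset.mem_powerset] at hp
      simp [Finset.union_sdiff_of_subset hp.2]
    · rintro ⟨U, W⟩ hp
      simp only [Finset.mem_sigma, Finset.mem_powerset] at hp
      have hd : Disjoint U W := by
        have := hp.2
        exact Finset.disjoint_left.2 fun x hxU hxW => (Finset.mem_sdiff.1 (this hxW)).2 hxU
      simp [Finset.union_sdiff_cancel_left hd]
    · rintro ⟨T, U⟩ hp; rfl
  rw [key]
  have inner : ∀ U ∈ A.powerset, ∑ W ∈ (A\U).powerset, (-1:ℝ)^(W.card+1) * h Uᶜ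
      = (if U = A then -h Aᶜ else 0) := by
    intro U hU
    rw [Finset.mem_powerset] at hU
    rw [← Finset.sum_mul]
    have hsum : ∑ W ∈ (A\U).powerset, (-1:ℝ)^(W.card+1)
        = -(((∑ W ∈ (A\U).powerset, (-1:ℤ)^W.card : ℤ) : ℝ)) := by
      push_cast
      rw [← Finset.sum_neg_distrib]
      exact Finset.sum_congr rfl fun W _ => by ring
    rw [hsum, Finset.sum_powerset_neg_one_pow_card]
    by_cases hUA : U = A
    · subst hUA
      simp
    · have : ¬ (A \ U = ∅) := fun hc => hUA (le_antisymm hU (Finset.sdiff_eq_empty_iff_subset.1 hc))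
      simp [this, hUA]
  rw [Finset.sum_congr rfl inner, Finset.sum_ite_eq' A.powerset A]
  simp

lemma sum_inter_sam {V : Type} [Fintype V] [DecidableEq V] (h : Finset V → ℝ) (S : Finset V) :
    ∑ T ∈ Finset.univ.powerset.filter (fun T => (S ∩ T).Nonempty), signedAtomMeasure h T
      = h S - h ∅ := by
  have hsplit := Finset.sum_filter_add_sum_filter_not (Finset.univ.powerset (α := V))
    (fun T => (S ∩ T).Nonempty) (signedAtomMeasure h)
  have h2 : (Finset.univ.powerset (α := V)).filter (fun T => ¬ (S ∩ T).Nonempty) = Sᶜ.powerset := by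
    ext T
    simp only [Finset.mem_filter, Finset.mem_powerset, Finset.subset_univ, true_and,
      Finset.not_nonempty_iff_eq_empty, ← Finset.disjoint_iff_inter_eq_empty]
    rw [disjoint_comm]
    exact (le_compl_iff_disjoint_right).symm
  rw [h2, sum_powerset_sam, sum_powerset_sam] at hsplit
  rw [Finset.compl_univ, compl_compl] at hsplit
  linarith

/-- Let `Q` be a conjunctive query with body atoms `u 1, …, u m` and FD set `Φ`,
and let `h : Finset V → ℝ` take only rational values, with `h(∅) = 0`, `h(A ∪ {y}) = h(A)` for
every FD `(A,y) ∈ Φ`, and `I_h(S) ≥ 0` for every nonempty `S`.  Then there are a positive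
integer `q`, a finite type of colors (`Fin c`), and a valid coloring `ℒ` of `(V, Φ)` with
`|ℒ(S)| = q * h(S)` for every `S ⊆ V`.  In particular, if additionally `h(vars(u j)) ≤ 1` for
all body atoms, then `|ℒ(vars(u0))| ≥ h(vars(u0)) * max_j |ℒ(vars(u j))|`. -/
theorem rational_feasible_point_gives_coloring
    {V : Type} [Fintype V] [DecidableEq V]
    {m : ℕ} (hm : 1 ≤ m)
    {a0 : ℕ} (u0 : Fin a0 → V)
    (a : Fin m → ℕ) (u : (j : Fin m) → Fin (a j) → V)
    (Φ : Set (Finset V × V))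
    (h : Finset V → ℝ)
    (hrat : ∀ S : Finset V, ∃ p : ℚ, h S = p)
    (h0 : h ∅ = 0)
    (hfd : ∀ p ∈ Φ, h (insert p.2 p.1) = h p.1)
    (hI : ∀ S : Finset V, S.Nonempty → 0 ≤ signedAtomMeasure h S) :
    ∃ (q : ℕ), 0 < q ∧ ∃ (c : ℕ) (ℒ : V → Finset (Fin c)),
      (∀ p ∈ Φ, ℒ p.2 ⊆ p.1.biUnion ℒ) ∧
      (∀ S : Finset V, ((S.biUnion ℒ).card : ℝ) = q * h S) ∧
      ((∀ j : Fin m, h (Finset.univ.image (u j)) ≤ 1) →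
        h (Finset.univ.image u0) *
            ((Finset.univ.sup (fun j => ((Finset.univ.image (u j)).biUnion ℒ).card) : ℕ) : ℝ) ≤
          (((Finset.univ.image u0).biUnion ℒ).card : ℝ)) := by
  classical
  choose r hr using hrat
  set Ir : Finset V → ℚ := fun S => ∑ T ∈ S.powerset, (-1:ℚ)^(T.card+1) * r (T ∪ Sᶜ) with hIrdef
  have hcast : ∀ S, ((Ir S : ℚ) : ℝ) = signedAtomMeasure h S := by
    intro S
    unfold signedAtomMeasure
    rw [hIrdef]
    push_cast
    exact Finset.sum_congr rfl fun T _ => by rw [hr]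
  set q : ℕ := ∏ S ∈ (Finset.univ : Finset V).powerset, (Ir S).den with hqdef
  have hqpos : 0 < q := Finset.prod_pos fun S _ => (Ir S).pos
  have hint : ∀ S : Finset V, ∃ z : ℤ, (q:ℚ) * Ir S = z := by
    intro S
    obtain ⟨k, hk⟩ := Finset.dvd_prod_of_mem (fun S => (Ir S).den)
      (Finset.mem_powerset.2 (Finset.subset_univ S))
    refine ⟨k * (Ir S).num, ?_⟩
    rw [hqdef]  -- unfold q? maybe already hk about product
    rw [hk]
    push_cast
    rw [mul_comm ((Ir S).den : ℚ) (k:ℚ), mul_assoc, Rat.den_mul_eq_num]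
  have hnonneg : ∀ S : Finset V, S.Nonempty → (0:ℚ) ≤ Ir S := by
    intro S hS
    have h1 : (0:ℝ) ≤ signedAtomMeasure h S := hI S hS
    rw [← hcast] at h1
    exact_mod_cast h1
  set n : Finset V → ℕ := fun S => ((q:ℚ) * Ir S).num.toNat with hndef
  have hnval : ∀ S : Finset V, S.Nonempty → ((n S : ℚ)) = (q:ℚ) * Ir S := by
    intro S hS
    obtain ⟨z, hz⟩ := hint S
    have hz0 : 0 ≤ z := by
      have : (0:ℚ) ≤ (q:ℚ) * Ir S := mul_nonneg (by positivity) (hnonneg S hS)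
      rw [hz] at this
      exact_mod_cast this
    rw [hndef]
    simp only [hz, Rat.num_intCast]
    exact_mod_cast Int.toNat_of_nonneg hz0
  set C := (Σ T : Finset V, Fin (n T)) with hC
  set e : C ≃ Fin (Fintype.card C) := Fintype.equivFin C with he
  set ℒ : V → Finset (Fin (Fintype.card C)) :=
    fun x => (Finset.univ.filter (fun p : C => x ∈ p.1)).image e with hℒ
  have hbi : ∀ S : Finset V, S.biUnion ℒ
      = (Finset.univ.filter (fun p : C => (S ∩ p.1).Nonempty)).image e := by
    intro S
    ext cc
    simp only [hℒ, Finset.mem_biUnion, Finset.mem_image, Finset.mem_filter, Finset.mem_univ,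
      true_and, Finset.Nonempty, Finset.mem_inter]
    constructor
    · rintro ⟨x, hxS, p, hxp, hep⟩
      exact ⟨p, ⟨x, hxS, hxp⟩, hep⟩
    · rintro ⟨p, ⟨x, hxS, hxp⟩, hep⟩
      exact ⟨x, hxS, p, hxp, hep⟩
  have hcardn : ∀ S : Finset V, (S.biUnion ℒ).card
      = ∑ T ∈ Finset.univ.powerset.filter (fun T => (S ∩ T).Nonempty), n T := by
    intro S
    rw [hbi, Finset.card_image_of_injective _ e.injective, Finset.card_filter]
    rw [← Finset.univ_sigma_univ, Finset.sum_sigma]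
    rw [Finset.sum_filter, Finset.powerset_univ]
    refine Finset.sum_congr rfl fun T _ => ?_
    split <;> simp
  have hcardR : ∀ S : Finset V, ((S.biUnion ℒ).card : ℝ) = q * h S := by
    intro S
    have hterm : ∀ T ∈ Finset.univ.powerset.filter (fun T => (S ∩ T).Nonempty),
        ((n T : ℝ)) = (q:ℝ) * signedAtomMeasure h T := by
      intro T hT
      have hTne : T.Nonempty := ((Finset.mem_filter.1 hT).2).mono Finset.inter_subset_right
      have h1 := hnval T hTne
      have h2 : ((n T : ℚ) : ℝ) = (((q:ℚ) * Ir T : ℚ) : ℝ) := by rw [h1]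
      push_cast at h2
      rw [hcast] at h2
      exact_mod_cast h2
    rw [hcardn]
    push_cast
    rw [Finset.sum_congr rfl hterm, ← Finset.mul_sum, sum_inter_sam h S, h0]
    ring
  refine ⟨q, hqpos, Fintype.card C, ℒ, ?_, hcardR, ?_⟩
  · intro p hp
    have h1 : ((insert p.2 p.1).biUnion ℒ).card = (p.1.biUnion ℒ).card := by
      have e1 := hcardR (insert p.2 p.1)
      have e2 := hcardR p.1
      rw [hfd p hp, ← e2] at e1
      exact_mod_cast e1
    have hsub : p.1.biUnion ℒ ⊆ (insert p.2 p.1).biUnion ℒ :=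
      Finset.biUnion_subset_biUnion_of_subset_left ℒ (Finset.subset_insert p.2 p.1)
    have heq : p.1.biUnion ℒ = (insert p.2 p.1).biUnion ℒ :=
      Finset.eq_of_subset_of_card_le hsub h1.le
    rw [heq]
    exact Finset.subset_biUnion_of_mem ℒ (Finset.mem_insert_self p.2 p.1)
  · intro hb
    have hne : (Finset.univ : Finset (Fin m)).Nonempty := ⟨⟨0, hm⟩, Finset.mem_univ _⟩
    obtain ⟨j0, _, hj0⟩ := Finset.exists_mem_eq_sup Finset.univ hne
      (fun j => ((Finset.univ.image (u j)).biUnion ℒ).card)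
    have hMq : ((Finset.univ.sup
        (fun j => ((Finset.univ.image (u j)).biUnion ℒ).card) : ℕ) : ℝ) ≤ q := by
      rw [hj0, hcardR]
      have := hb j0
      have hq' : (0:ℝ) < q := by exact_mod_cast hqpos
      nlinarith
    have h0n : 0 ≤ h (Finset.univ.image u0) := by
      have e1 := hcardR (Finset.univ.image u0)
      have hc0 : (0:ℝ) ≤ (((Finset.univ.image u0).biUnion ℒ).card : ℝ) := Nat.cast_nonneg _
      have hq' : (0:ℝ) < q := by exact_mod_cast hqpos
      nlinarith
    calc h (Finset.univ.image u0) * _ ≤ h (Finset.univ.image u0) * q :=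
          mul_le_mul_of_nonneg_left hMq h0n
      _ = (((Finset.univ.image u0).biUnion ℒ).card : ℝ) := by rw [hcardR]; ring
end

section
/- Let m ≥ 1, k := 2m, C a type of colors, and ℒ : Fin k × Fin m → Finset C such that for every j ∈ Fin m, every S ⊆ Fin k with |S| ≥ m, and every i ∈ Fin k, ℒ(i,j) ⊆ ⋃_{i'∈S} ℒ(i',j). Then |⋃_{(i,j)} ℒ(i,j)| ≤ 2 · M, where M is the maximum of all the numbers |⋃_{i ∈ Fin k} ℒ(i,j)| (over j ∈ Fin m) and |⋃_{j ∈ Fin m} ℒ(i,j)| (over i ∈ Fin k). -/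
/-- Let `m ≥ 1`, `k := 2m`, and `ℒ : Fin k × Fin m → Finset C` be such that
within each column group `j`, the colors of any variable are contained in the union of the
colors of any `m` of the `k` variables of that group.  Then the number of colors appearing on
the whole grid is at most `2 * M`, where `M` is the maximum of the numbers of colors appearing
in the group atoms (columns `j`) and the row atoms (rows `i`). -/
theorem grid_coloring_color_number_le_two
    {m : ℕ} (hm : 1 ≤ m) {C : Type} [DecidableEq C]
    (ℒ : Fin (2 * m) × Fin m → Finset C)
    (hfd : ∀ j : Fin m, ∀ S : Finset (Fin (2 * m)), m ≤ S.card →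
      ∀ i : Fin (2 * m), ℒ (i, j) ⊆ S.sup (fun i' => ℒ (i', j))) :
    (Finset.univ.sup ℒ).card ≤
      2 * max
        (Finset.univ.sup (fun j : Fin m =>
          (Finset.univ.sup (fun i : Fin (2 * m) => ℒ (i, j))).card))
        (Finset.univ.sup (fun i : Fin (2 * m) =>
          (Finset.univ.sup (fun j : Fin m => ℒ (i, j))).card)) := by
  classical
  set T : Finset C := Finset.univ.sup ℒ with hT
  set row : Fin (2 * m) → Finset C := fun i => Finset.univ.sup (fun j : Fin m => ℒ (i, j))
    with hrow
  set M : ℕ := max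
        (Finset.univ.sup (fun j : Fin m =>
          (Finset.univ.sup (fun i : Fin (2 * m) => ℒ (i, j))).card))
        (Finset.univ.sup (fun i : Fin (2 * m) =>
          (Finset.univ.sup (fun j : Fin m => ℒ (i, j))).card)) with hM
  -- each row has at most M colors
  have hrowM : ∀ i : Fin (2 * m), (row i).card ≤ M := by
    intro i
    refine le_trans ?_ (le_max_right _ _)
    exact Finset.le_sup (f := fun i => (row i).card) (Finset.mem_univ i)
  -- every color of T appears in at least m+1 rows
  have hkey : ∀ c ∈ T, m + 1 ≤ (Finset.univ.filter (fun i => c ∈ row i)).card := by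
    intro c hc
    obtain ⟨⟨i₀, j₀⟩, -, hc0⟩ := Finset.mem_sup.mp hc
    set A : Finset (Fin (2 * m)) := Finset.univ.filter (fun i => c ∈ ℒ (i, j₀)) with hA
    have hAcard : m + 1 ≤ A.card := by
      by_contra h
      push_neg at h
      have hAle : A.card ≤ m := Nat.lt_succ_iff.mp h
      have hScard : m ≤ Aᶜ.card := by
        have := Finset.card_compl A
        simp only [Fintype.card_fin] at this
        omega
      have hsub := hfd j₀ Aᶜ hScard i₀ hc0
      obtain ⟨i', hi', hci'⟩ := Finset.mem_sup.mp hsub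
      have : i' ∈ A := by simp [hA, hci']
      exact (Finset.mem_compl.mp hi') this
    refine le_trans hAcard (Finset.card_le_card ?_)
    intro i hi
    simp only [hA, Finset.mem_filter, Finset.mem_univ, true_and] at hi ⊢
    exact Finset.mem_sup.mpr ⟨j₀, Finset.mem_univ _, hi⟩
  -- double counting
  have hcount : (m + 1) * T.card ≤ ∑ i : Fin (2 * m), (row i).card := by
    have h1 : ∑ i : Fin (2 * m), (row i).card
        ≥ ∑ i : Fin (2 * m), (T.filter (fun c => c ∈ row i)).card := by
      refine Finset.sum_le_sum fun i _ => ?_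
      exact Finset.card_le_card (fun c hc => (Finset.mem_filter.mp hc).2)
    have h2 : ∑ i : Fin (2 * m), (T.filter (fun c => c ∈ row i)).card
        = ∑ c ∈ T, (Finset.univ.filter (fun i => c ∈ row i)).card := by
      simp only [Finset.card_filter]
      rw [Finset.sum_comm]
    have h3 : (m + 1) * T.card ≤ ∑ c ∈ T, (Finset.univ.filter (fun i => c ∈ row i)).card := by
      calc (m + 1) * T.card = ∑ _c ∈ T, (m + 1) := by
            rw [Finset.sum_const, smul_eq_mul, mul_comm]
        _ ≤ _ := Finset.sum_le_sum hkey
    omega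
  have hsum : ∑ i : Fin (2 * m), (row i).card ≤ 2 * m * M := by
    calc ∑ i : Fin (2 * m), (row i).card ≤ ∑ _i : Fin (2 * m), M :=
          Finset.sum_le_sum fun i _ => hrowM i
      _ = 2 * m * M := by simp [mul_comm]
  have : (m + 1) * T.card ≤ (m + 1) * (2 * M) := by
    calc (m + 1) * T.card ≤ 2 * m * M := le_trans hcount hsum
      _ ≤ (m + 1) * (2 * M) := by ring_nf; nlinarith
  exact Nat.le_of_mul_le_mul_left this (by omega)
end

section
/- Let m ≥ 1, k := 2m, C a type of colors, and ℒ : Fin k → Finset C such that for every S ⊆ Fin k with |S| ≥ m and every i ∈ Fin k, ℒ(i) ⊆ ⋃_{i'∈S} ℒ(i'). Then every color c ∈ ⋃_{i} ℒ(i) satisfies |{ i ∈ Fin k : c ∈ ℒ(i) }| ≥ m + 1. -/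
/-- Let `m ≥ 1`, `k := 2m`, and `ℒ : Fin k → Finset C` be such that the colors
of any variable are contained in the union of the colors of any `m` of the `k` variables.  Then
every color appearing in some `ℒ(i)` appears in at least `m + 1` of the sets `ℒ(i)`. -/
theorem color_appears_in_many_labels
    {m : ℕ} (hm : 1 ≤ m) {C : Type} [DecidableEq C]
    (ℒ : Fin (2 * m) → Finset C)
    (hfd : ∀ S : Finset (Fin (2 * m)), m ≤ S.card →
      ∀ i : Fin (2 * m), ℒ i ⊆ S.sup ℒ)
    (c : C) (hc : c ∈ Finset.univ.sup ℒ) :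
    m + 1 ≤ (Finset.univ.filter (fun i => c ∈ ℒ i)).card := by
  by_contra h
  push_neg at h
  set T := Finset.univ.filter (fun i => c ∈ ℒ i) with hT
  have hTcard : T.card ≤ m := Nat.lt_succ_iff.mp h
  have hcomp : m ≤ Tᶜ.card := by
    have := Finset.card_compl T
    simp only [Fintype.card_fin] at this
    omega
  obtain ⟨i, _, hci⟩ := Finset.mem_sup.mp hc
  have := hfd Tᶜ hcomp i hci
  obtain ⟨j, hj, hcj⟩ := Finset.mem_sup.mp this
  have : j ∈ T := by simp [hT, hcj]
  exact (Finset.mem_compl.mp hj) this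
end

section
/- For every real number α there exist a finite variable set V, a conjunctive query Q over V with body atoms u_1,…,u_m, a set Φ of functional dependencies over V, and a database D over a finite universe compatible with Φ, such that: (i) every valid coloring ℒ of (V,Φ) satisfies |ℒ(vars(u_0))| ≤ 2 · max_{1≤j≤m} |ℒ(vars(u_j))|; (ii) rmax(Q,D) ≥ 2; and (iii) |Q(D)| ≥ rmax(Q,D)^{2α} (as real numbers, using the real power function). In particular, the worst-case size increase exceeds rmax raised to α times the color number, so the color number does not upper-bound the size increase up to any constant factor. -/
open Finset Polynomial

namespace SuperGap

variable {F : Type} [Field F]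

def evalV {a : ℕ} (c : Fin a → F) (x : F) : F := ∑ k : Fin a, c k * x ^ (k : ℕ)

lemma vanish {a s : ℕ} (ha : 0 < a) {t : Fin s → F} (ht : Function.Injective t)
    (c : Fin a → F) (S : Finset (Fin s)) (hcard : a ≤ S.card)
    (hv : ∀ i ∈ S, evalV c (t i) = 0) : ∀ k, c k = 0 := by
  classical
  set f : F[X] := ∑ k : Fin a, C (c k) * X ^ (k : ℕ) with hf
  have hdeg : f.natDegree < a := by
    have : f.natDegree ≤ a - 1 := by
      apply Polynomial.natDegree_sum_le_of_forall_le
      intro k _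
      exact (Polynomial.natDegree_C_mul_X_pow_le (c k) (k : ℕ)).trans (by omega)
    omega
  have heval : ∀ x, f.eval x = evalV c x := by
    intro x
    simp [hf, evalV, Polynomial.eval_finset_sum]
  have hf0 : f = 0 := by
    apply Polynomial.eq_zero_of_natDegree_lt_card_of_eval_eq_zero' f (S.image t)
    · intro x hx
      obtain ⟨i, hi, rfl⟩ := Finset.mem_image.mp hx
      rw [heval]; exact hv i hi
    · calc f.natDegree < a := hdeg
        _ ≤ S.card := hcard
        _ = (S.image t).card := (Finset.card_image_of_injective S ht).symm
  intro k
  have : f.coeff (k : ℕ) = c k := by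
    rw [hf, Polynomial.finset_sum_coeff]
    rw [Finset.sum_eq_single k]
    · simp
    · intro b _ hb
      have hkb : ((k : ℕ)) ≠ ((b : ℕ)) := fun h => hb (Fin.ext h.symm)
      simp [Polynomial.coeff_C_mul, Polynomial.coeff_X_pow, hkb]
    · simp
  rw [hf0] at this
  simpa using this.symm

/-! grid setup -/

section Grid

variable (a s p : ℕ) [Fact p.Prime]

def pt (i : Fin s) : ZMod p := ((i : ℕ) : ZMod p)

lemma pt_inj (hsp : s ≤ p) : Function.Injective (pt s p) := by
  intro i j h
  have hi : ((i : ℕ) : ZMod p).val = (i : ℕ) := ZMod.val_cast_of_lt (lt_of_lt_of_le i.isLt hsp)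
  have hj : ((j : ℕ) : ZMod p).val = (j : ℕ) := ZMod.val_cast_of_lt (lt_of_lt_of_le j.isLt hsp)
  have : (i : ℕ) = (j : ℕ) := by rw [← hi, ← hj]; exact congrArg ZMod.val h
  exact Fin.ext this

noncomputable def emb : ZMod p ≃ Fin p := Fintype.equivFinOfCardEq (ZMod.card p)

def pos (i j : Fin s) : Fin (s * s) := finProdFinEquiv (i, j)

lemma pos_inj_left (r : Fin s) : Function.Injective (fun i => pos s r i) := by
  intro i j h
  have := finProdFinEquiv.injective h
  exact (Prod.ext_iff.mp this).2

lemma pos_inj_right (cc : Fin s) : Function.Injective (fun i => pos s i cc) := by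
  intro i j h
  have := finProdFinEquiv.injective h
  exact (Prod.ext_iff.mp this).1

def rowMap (r : Fin s) : Fin s → Fin (s * s) := fun i => pos s r i

def colMap (cc : Fin s) : Fin s → Fin (s * s) := fun i => pos s i cc

def atom : Fin (s + s) → Fin s → Fin (s * s) := fun j =>
  Fin.addCases (motive := fun _ => Fin s → Fin (s * s)) (rowMap s) (colMap s) j

@[simp] lemma atom_left (r : Fin s) : atom s (Fin.castAdd s r) = rowMap s r := by
  simp [atom]

@[simp] lemma atom_right (cc : Fin s) : atom s (Fin.natAdd s cc) = colMap s cc := by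
  unfold atom
  exact Fin.addCases_right cc

noncomputable def code : Finset (Fin s → Fin p) :=
  Finset.univ.image (fun c : Fin a → ZMod p => fun i => emb p (evalV c (pt s p i)))

lemma code_card (ha : 0 < a) (hsp : s ≤ p) (has : a ≤ s) : (code a s p).card = p ^ a := by
  rw [code, Finset.card_image_of_injective _ ?_, Finset.card_univ]
  · simp [ZMod.card]
  · intro c c' h
    have hz : ∀ i : Fin s, evalV (fun k => c k - c' k) (pt s p i) = 0 := by
      intro i
      have := congrFun h i
      have h2 : evalV c (pt s p i) = evalV c' (pt s p i) := (emb p).injective this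
      simp only [evalV, sub_mul, Finset.sum_sub_distrib]
      rw [sub_eq_zero]
      simpa [evalV] using h2
    have := vanish ha (pt_inj s p hsp) (fun k => c k - c' k) Finset.univ
      (by simpa using has) (fun i _ => hz i)
    funext k
    exact sub_eq_zero.mp (by simpa using this k)

/-- satisfying assignments -/
def Sat (θ : Fin (s * s) → Fin p) : Prop := ∀ j : Fin (s + s), θ ∘ atom s j ∈ code a s p

lemma sat_row {θ : Fin (s * s) → Fin p} (hθ : Sat a s p θ) (r : Fin s) :
    ∃ c : Fin a → ZMod p, ∀ i, (emb p).symm (θ (pos s r i)) = evalV c (pt s p i) := by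
  have := hθ (Fin.castAdd s r)
  rw [atom_left] at this
  obtain ⟨c, -, hc⟩ := Finset.mem_image.mp this
  refine ⟨c, fun i => ?_⟩
  have := congrFun hc i
  simp only [Function.comp_apply, rowMap] at this
  rw [← this]
  simp

lemma sat_col {θ : Fin (s * s) → Fin p} (hθ : Sat a s p θ) (cc : Fin s) :
    ∃ c : Fin a → ZMod p, ∀ i, (emb p).symm (θ (pos s i cc)) = evalV c (pt s p i) := by
  have := hθ (Fin.natAdd s cc)
  rw [atom_right] at this
  obtain ⟨c, -, hc⟩ := Finset.mem_image.mp this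
  refine ⟨c, fun i => ?_⟩
  have := congrFun hc i
  simp only [Function.comp_apply, colMap] at this
  rw [← this]
  simp

lemma compat_core (ha : 0 < a) (hs : s = 2 * a) (hsp : s ≤ p)
    {θ θ' : Fin (s * s) → Fin p} (hθ : Sat a s p θ) (hθ' : Sat a s p θ')
    (y : Fin (s * s)) (Q : Finset (Fin (s + s))) (hQ : Q.card = s + 1)
    (hagree : ∀ x ∈ (Q.biUnion fun j => Finset.univ.image (atom s j)).erase y, θ x = θ' x) :
    θ y = θ' y := by
  classical
  set G : Fin s → Fin s → ZMod p :=
    fun i j => (emb p).symm (θ (pos s i j)) - (emb p).symm (θ' (pos s i j)) with hG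
  have rowCoeff : ∀ r : Fin s, ∃ c : Fin a → ZMod p, ∀ i, G r i = evalV c (pt s p i) := by
    intro r
    obtain ⟨c1, hc1⟩ := sat_row a s p hθ r
    obtain ⟨c2, hc2⟩ := sat_row a s p hθ' r
    refine ⟨fun k => c1 k - c2 k, fun i => ?_⟩
    simp only [hG, hc1 i, hc2 i, evalV, sub_mul, Finset.sum_sub_distrib]
  have colCoeff : ∀ cc : Fin s, ∃ c : Fin a → ZMod p, ∀ i, G i cc = evalV c (pt s p i) := by
    intro cc
    obtain ⟨c1, hc1⟩ := sat_col a s p hθ cc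
    obtain ⟨c2, hc2⟩ := sat_col a s p hθ' cc
    refine ⟨fun k => c1 k - c2 k, fun i => ?_⟩
    simp only [hG, hc1 i, hc2 i, evalV, sub_mul, Finset.sum_sub_distrib]
  have agreeG : ∀ i j : Fin s, (∃ q ∈ Q, ∃ i0, atom s q i0 = pos s i j) → pos s i j ≠ y →
      G i j = 0 := by
    rintro i j ⟨q, hq, i0, h0⟩ hne
    have hx : pos s i j ∈ (Q.biUnion fun j => Finset.univ.image (atom s j)).erase y :=
      Finset.mem_erase.mpr ⟨hne, Finset.mem_biUnion.mpr
        ⟨q, hq, Finset.mem_image.mpr ⟨i0, Finset.mem_univ _, h0⟩⟩⟩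
    simp [hG, hagree _ hx]
  set Rw : Finset (Fin s) := Finset.univ.filter (fun r => Fin.castAdd s r ∈ Q) with hRwdef
  set Cl : Finset (Fin s) := Finset.univ.filter (fun cc => Fin.natAdd s cc ∈ Q) with hCldef
  have hsum : s + 1 ≤ Rw.card + Cl.card := by
    have hsub : Q ⊆ Rw.image (Fin.castAdd s) ∪ Cl.image (Fin.natAdd s) := by
      intro q hq
      refine Fin.addCases (motive := fun q' => q' ∈ Q →
        q' ∈ Rw.image (Fin.castAdd s) ∪ Cl.image (Fin.natAdd s)) ?_ ?_ q hq
      · intro r hr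
        exact Finset.mem_union_left _ (Finset.mem_image.mpr
          ⟨r, Finset.mem_filter.mpr ⟨Finset.mem_univ _, hr⟩, rfl⟩)
      · intro cc hcc
        exact Finset.mem_union_right _ (Finset.mem_image.mpr
          ⟨cc, Finset.mem_filter.mpr ⟨Finset.mem_univ _, hcc⟩, rfl⟩)
    calc s + 1 = Q.card := hQ.symm
      _ ≤ (Rw.image (Fin.castAdd s) ∪ Cl.image (Fin.natAdd s)).card := Finset.card_le_card hsub
      _ ≤ (Rw.image (Fin.castAdd s)).card + (Cl.image (Fin.natAdd s)).card :=
          Finset.card_union_le _ _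
      _ ≤ Rw.card + Cl.card := add_le_add (Finset.card_image_le) (Finset.card_image_le)
  have rowZero : ∀ r ∈ Rw, ∀ i, G r i = 0 := by
    intro r hr
    obtain ⟨c, hc⟩ := rowCoeff r
    have hvan : ∀ k, c k = 0 := by
      apply vanish ha (pt_inj s p hsp) c (Finset.univ.filter (fun i => ¬ (pos s r i = y)))
      · have h1 : (Finset.univ.filter (fun i => pos s r i = y)).card ≤ 1 := by
          apply Finset.card_le_one.mpr
          intro i1 h1 i2 h2
          exact pos_inj_left s r
            (((Finset.mem_filter.mp h1).2).trans ((Finset.mem_filter.mp h2).2).symm)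
        have h2 := Finset.card_filter_add_card_filter_not
          (s := (Finset.univ : Finset (Fin s))) (p := fun i => pos s r i = y)
        have h3 : (Finset.univ : Finset (Fin s)).card = s := by simp
        omega
      · intro i hi
        have := agreeG r i ⟨Fin.castAdd s r, (Finset.mem_filter.mp hr).2, i,
          by rw [atom_left]; rfl⟩ (Finset.mem_filter.mp hi).2
        rw [← hc i]; exact this
    intro i
    rw [hc i]; simp [evalV, hvan]
  have colZero : ∀ cc ∈ Cl, ∀ i, G i cc = 0 := by
    intro cc hcc
    obtain ⟨c, hc⟩ := colCoeff cc
    have hvan : ∀ k, c k = 0 := by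
      apply vanish ha (pt_inj s p hsp) c (Finset.univ.filter (fun i => ¬ (pos s i cc = y)))
      · have h1 : (Finset.univ.filter (fun i => pos s i cc = y)).card ≤ 1 := by
          apply Finset.card_le_one.mpr
          intro i1 h1 i2 h2
          exact pos_inj_right s cc
            (((Finset.mem_filter.mp h1).2).trans ((Finset.mem_filter.mp h2).2).symm)
        have h2 := Finset.card_filter_add_card_filter_not
          (s := (Finset.univ : Finset (Fin s))) (p := fun i => pos s i cc = y)
        have h3 : (Finset.univ : Finset (Fin s)).card = s := by simp
        omega
      · intro i hi
        have := agreeG i cc ⟨Fin.natAdd s cc, (Finset.mem_filter.mp hcc).2, i,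
          by rw [atom_right]; rfl⟩ (Finset.mem_filter.mp hi).2
        rw [← hc i]; exact this
    intro i
    rw [hc i]; simp [evalV, hvan]
  set y1 : Fin s := (finProdFinEquiv.symm y).1 with hy1
  set y2 : Fin s := (finProdFinEquiv.symm y).2 with hy2
  have hy : pos s y1 y2 = y := by
    have hp2 : (y1, y2) = finProdFinEquiv.symm y := by rw [hy1, hy2]
    rw [pos, hp2]
    exact finProdFinEquiv.apply_symm_apply y
  have hG0 : G y1 y2 = 0 := by
    by_cases hCl : a ≤ Cl.card
    · obtain ⟨c, hc⟩ := rowCoeff y1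
      have hvan := vanish ha (pt_inj s p hsp) c Cl hCl
        (fun cc hcc => by rw [← hc cc]; exact colZero cc hcc y1)
      rw [hc y2]; simp [evalV, hvan]
    · have hRw : a ≤ Rw.card := by omega
      obtain ⟨d, hd⟩ := colCoeff y2
      have hvan := vanish ha (pt_inj s p hsp) d Rw hRw
        (fun r hr => by rw [← hd r]; exact rowZero r hr y2)
      rw [hd y1]; simp [evalV, hvan]
  have : (emb p).symm (θ (pos s y1 y2)) = (emb p).symm (θ' (pos s y1 y2)) := by
    have := sub_eq_zero.mp hG0
    simpa [hG] using this
  rw [hy] at this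
  exact (emb p).symm.injective this

noncomputable def tensor (c : Fin a → Fin a → ZMod p) : Fin (s * s) → Fin p :=
  fun x => emb p (∑ k : Fin a, ∑ l : Fin a,
    c k l * (pt s p (finProdFinEquiv.symm x).1) ^ (k : ℕ)
      * (pt s p (finProdFinEquiv.symm x).2) ^ (l : ℕ))

lemma tensor_pos (c : Fin a → Fin a → ZMod p) (i j : Fin s) :
    tensor a s p c (pos s i j) = emb p (∑ k : Fin a, ∑ l : Fin a,
      c k l * (pt s p i) ^ (k : ℕ) * (pt s p j) ^ (l : ℕ)) := by
  rw [tensor, pos]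
  simp

lemma tensor_sat (c : Fin a → Fin a → ZMod p) : Sat a s p (tensor a s p c) := by
  intro j
  refine Fin.addCases (motive := fun j' => tensor a s p c ∘ atom s j' ∈ code a s p) ?_ ?_ j
  · intro r
    rw [atom_left]
    refine Finset.mem_image.mpr ⟨fun l => ∑ k : Fin a, c k l * (pt s p r) ^ (k : ℕ),
      Finset.mem_univ _, funext fun i => ?_⟩
    show emb p _ = tensor a s p c (rowMap s r i)
    rw [show rowMap s r i = pos s r i from rfl, tensor_pos]
    congr 1
    rw [evalV]
    rw [Finset.sum_comm]
    apply Finset.sum_congr rfl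
    intro k _
    rw [Finset.sum_mul]
  · intro cc
    rw [atom_right]
    refine Finset.mem_image.mpr ⟨fun k => ∑ l : Fin a, c k l * (pt s p cc) ^ (l : ℕ),
      Finset.mem_univ _, funext fun i => ?_⟩
    show emb p _ = tensor a s p c (colMap s cc i)
    rw [show colMap s cc i = pos s i cc from rfl, tensor_pos]
    congr 1
    rw [evalV]
    apply Finset.sum_congr rfl
    intro k _
    rw [Finset.sum_mul]
    apply Finset.sum_congr rfl
    intro l _
    ring

lemma tensor_inj (ha : 0 < a) (hsp : s ≤ p) (has : a ≤ s) :
    Function.Injective (tensor a s p) := by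
  intro c c' h
  have hz : ∀ i j : Fin s, (∑ k : Fin a, ∑ l : Fin a,
      (c k l - c' k l) * (pt s p i) ^ (k : ℕ) * (pt s p j) ^ (l : ℕ)) = 0 := by
    intro i j
    have h1 := congrFun h (pos s i j)
    rw [tensor_pos, tensor_pos] at h1
    have h2 := (emb p).injective h1
    simp only [sub_mul, Finset.sum_sub_distrib]
    rw [sub_eq_zero]
    exact h2
  have hzi : ∀ i : Fin s, ∀ l : Fin a,
      (∑ k : Fin a, (c k l - c' k l) * (pt s p i) ^ (k : ℕ)) = 0 := by
    intro i
    apply vanish ha (pt_inj s p hsp)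
      (fun l => ∑ k : Fin a, (c k l - c' k l) * (pt s p i) ^ (k : ℕ))
      Finset.univ (by simpa using has)
    intro j _
    rw [evalV, ← hz i j]
    conv_rhs => rw [Finset.sum_comm]
    apply Finset.sum_congr rfl
    intro l _
    rw [Finset.sum_mul]
  have hkl : ∀ k l, c k l - c' k l = 0 := by
    intro k l
    exact vanish ha (pt_inj s p hsp) (fun k => c k l - c' k l) Finset.univ
      (by simpa using has) (fun i _ => hzi i l) k
  funext k l
  exact sub_eq_zero.mp (hkl k l)

end Grid
end SuperGap


/-- For every real number `α` there exist a finite variable set (`Fin v`), a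
conjunctive query `Q` (output atom `u0`, body atoms `u j` labelled by `σ j`), a set `Φ` of
functional dependencies, and a database `D` over a finite universe (`Fin w`) compatible with
`Φ`, such that: (i) every valid coloring `ℒ` of `(V, Φ)` satisfies
`|ℒ(vars(u0))| ≤ 2 * max_j |ℒ(vars(u j))|`; (ii) `rmax(Q,D) ≥ 2`; and (iii)
`|Q(D)| ≥ rmax(Q,D) ^ (2α)` (real power).  Hence the color number does not upper-bound the
worst-case size increase up to any constant factor. -/
theorem superconstant_gap_color_number (α : ℝ) :
    ∃ (v n m : ℕ) (_ : 1 ≤ m) (a0 : ℕ) (u0 : Fin a0 → Fin v)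
      (ar : Fin n → ℕ) (σ : Fin m → Fin n)
      (u : (j : Fin m) → Fin (ar (σ j)) → Fin v)
      (Φ : Set (Finset (Fin v) × Fin v))
      (w : ℕ) (R : (i : Fin n) → Finset (Fin (ar i) → Fin w)),
      -- D is compatible with Φ
      (∀ p ∈ Φ, ∀ θ θ' : Fin v → Fin w,
        (∀ j, θ ∘ u j ∈ R (σ j)) → (∀ j, θ' ∘ u j ∈ R (σ j)) →
        (∀ x ∈ p.1, θ x = θ' x) → θ p.2 = θ' p.2) ∧
      -- (i) every valid coloring has ratio at most 2
      (∀ (C : Type) [DecidableEq C], ∀ ℒ : Fin v → Finset C,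
        (∀ p ∈ Φ, ℒ p.2 ⊆ p.1.biUnion ℒ) →
        ((Finset.univ.image u0).biUnion ℒ).card ≤
          2 * Finset.univ.sup (fun j => ((Finset.univ.image (u j)).biUnion ℒ).card)) ∧
      -- (ii) rmax ≥ 2
      2 ≤ Finset.univ.sup (fun i => (R i).card) ∧
      -- (iii) |Q(D)| ≥ rmax ^ (2α)
      (((Finset.univ.sup (fun i => (R i).card) : ℕ) : ℝ) ^ (2 * α) ≤
        (((Finset.univ.filter (fun θ : Fin v → Fin w => ∀ j, θ ∘ u j ∈ R (σ j))).image
            (fun θ => θ ∘ u0)).card : ℝ)) := by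
  classical
  set a : ℕ := max 1 (⌈2 * α⌉₊) with hadef
  have ha : 0 < a := lt_of_lt_of_le one_pos (le_max_left _ _)
  set s : ℕ := 2 * a with hsdef
  have hs0 : 0 < s := by omega
  obtain ⟨p, hps, hp⟩ := Nat.exists_infinite_primes s
  haveI : Fact p.Prime := ⟨hp⟩
  have has : a ≤ s := by omega
  refine ⟨s * s, 1, s + s, by omega, s * s, id, (fun _ => s), (fun _ => 0), SuperGap.atom s,
    {pr : Finset (Fin (s * s)) × Fin (s * s) | ∃ (y : Fin (s * s)) (Q : Finset (Fin (s + s))),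
      Q.card = s + 1 ∧ pr = ((Q.biUnion fun j => Finset.univ.image (SuperGap.atom s j)).erase y, y)},
    p, (fun _ => SuperGap.code a s p), ?_, ?_, ?_, ?_⟩
  · -- compatibility
    rintro pr ⟨y, Q, hQ, rfl⟩ θ θ' h1 h2 hag
    exact SuperGap.compat_core a s p ha rfl hps h1 h2 y Q hQ hag
  · -- (i)
    intro C _ ℒ hval
    set B : Fin (s + s) → Finset C :=
      fun j => (Finset.univ.image (SuperGap.atom s j)).biUnion ℒ with hB
    set Tc : Finset C := ((Finset.univ.image (id : Fin (s * s) → Fin (s * s))).biUnion ℒ)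
      with hTc
    set M : ℕ := Finset.univ.sup (fun j => (B j).card) with hM
    have claim : ∀ c ∈ Tc, s ≤ (Finset.univ.filter (fun j => c ∈ B j)).card := by
      intro c hc
      obtain ⟨y, -, hcy⟩ := Finset.mem_biUnion.mp hc
      by_contra hlt
      push_neg at hlt
      have hcompl : s + 1 ≤ (Finset.univ.filter (fun j => ¬ (c ∈ B j))).card := by
        have h2 := Finset.card_filter_add_card_filter_not
          (s := (Finset.univ : Finset (Fin (s + s)))) (p := fun j => c ∈ B j)
        have h3 : (Finset.univ : Finset (Fin (s + s))).card = s + s := by simp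
        omega
      obtain ⟨Q, hQsub, hQcard⟩ := Finset.exists_subset_card_eq hcompl
      have hΦ : ((Q.biUnion fun j => Finset.univ.image (SuperGap.atom s j)).erase y, y) ∈
          {pr : Finset (Fin (s * s)) × Fin (s * s) |
            ∃ (y : Fin (s * s)) (Q : Finset (Fin (s + s))), Q.card = s + 1 ∧
              pr = ((Q.biUnion fun j => Finset.univ.image (SuperGap.atom s j)).erase y, y)} :=
        ⟨y, Q, hQcard, rfl⟩
      have hsubv := hval _ hΦ
      have := hsubv hcy
      obtain ⟨x, hx, hcx⟩ := Finset.mem_biUnion.mp this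
      obtain ⟨-, hxQ⟩ := Finset.mem_erase.mp hx
      obtain ⟨j, hjQ, hxj⟩ := Finset.mem_biUnion.mp hxQ
      have hcBj : c ∈ B j := Finset.mem_biUnion.mpr ⟨x, hxj, hcx⟩
      have := hQsub hjQ
      rw [Finset.mem_filter] at this
      exact this.2 hcBj
    have hdc : Tc.card * s ≤ ∑ j : Fin (s + s), (B j).card := by
      calc Tc.card * s = ∑ _c ∈ Tc, s := by rw [Finset.sum_const, smul_eq_mul]
        _ ≤ ∑ c ∈ Tc, (Finset.univ.filter (fun j => c ∈ B j)).card :=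
            Finset.sum_le_sum claim
        _ = ∑ c ∈ Tc, ∑ j : Fin (s + s), (if c ∈ B j then 1 else 0) := by
            apply Finset.sum_congr rfl
            intro c _
            rw [Finset.card_filter]
        _ = ∑ j : Fin (s + s), ∑ c ∈ Tc, (if c ∈ B j then 1 else 0) := Finset.sum_comm
        _ = ∑ j : Fin (s + s), (Tc.filter (fun c => c ∈ B j)).card := by
            apply Finset.sum_congr rfl
            intro j _
            rw [Finset.card_filter]
        _ ≤ ∑ j : Fin (s + s), (B j).card := by
            apply Finset.sum_le_sum
            intro j _
            apply Finset.card_le_card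
            intro x hx
            exact (Finset.mem_filter.mp hx).2
    have hsum2 : ∑ j : Fin (s + s), (B j).card ≤ (s + s) * M := by
      have := Finset.sum_le_card_nsmul Finset.univ (fun j => (B j).card) M
        (fun j _ => by
          rw [hM]
          exact Finset.le_sup (f := fun j : Fin (s + s) => (B j).card) (Finset.mem_univ j))
      calc ∑ j : Fin (s + s), (B j).card ≤ (Finset.univ : Finset (Fin (s + s))).card • M :=
            this
        _ = (s + s) * M := by simp [smul_eq_mul]
    have hfin : Tc.card * s ≤ s * (2 * M) := by
      calc Tc.card * s ≤ (s + s) * M := le_trans hdc hsum2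
        _ = s * (2 * M) := by ring
    have hfin' : s * Tc.card ≤ s * (2 * M) := by
      rw [mul_comm Tc.card s] at hfin
      exact hfin
    exact Nat.le_of_mul_le_mul_left hfin' hs0
  · -- (ii)
    have hsup : Finset.univ.sup (fun _i : Fin 1 => (SuperGap.code a s p).card) = (SuperGap.code a s p).card :=
      Finset.sup_const Finset.univ_nonempty _
    rw [hsup, SuperGap.code_card a s p ha hps has]
    calc 2 ≤ p := hp.two_le
      _ ≤ p ^ a := Nat.le_self_pow ha.ne' p
  · -- (iii)
    have hsup : Finset.univ.sup (fun _i : Fin 1 => (SuperGap.code a s p).card) = (SuperGap.code a s p).card :=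
      Finset.sup_const Finset.univ_nonempty _
    rw [hsup, SuperGap.code_card a s p ha hps has]
    have himg : ((Finset.univ.filter
          (fun θ : Fin (s * s) → Fin p => ∀ j, θ ∘ SuperGap.atom s j ∈ SuperGap.code a s p)).image
            (fun θ => θ ∘ (id : Fin (s * s) → Fin (s * s)))) =
        (Finset.univ.filter
          (fun θ : Fin (s * s) → Fin p => ∀ j, θ ∘ SuperGap.atom s j ∈ SuperGap.code a s p)) := by
      have hfun : (fun θ : Fin (s * s) → Fin p => θ ∘ (id : Fin (s * s) → Fin (s * s))) =
          fun θ => θ := by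
        funext θ
        exact Function.comp_id θ
      rw [hfun, Finset.image_id']
    rw [himg]
    have hcount : p ^ (a * a) ≤ (Finset.univ.filter
        (fun θ : Fin (s * s) → Fin p => ∀ j, θ ∘ SuperGap.atom s j ∈ SuperGap.code a s p)).card := by
      have hsub : (Finset.univ.image (SuperGap.tensor a s p)) ⊆
          Finset.univ.filter
            (fun θ : Fin (s * s) → Fin p => ∀ j, θ ∘ SuperGap.atom s j ∈ SuperGap.code a s p) := by
        intro θ hθ
        obtain ⟨c, -, rfl⟩ := Finset.mem_image.mp hθ
        exact Finset.mem_filter.mpr ⟨Finset.mem_univ _, SuperGap.tensor_sat a s p c⟩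
      have hcard : (Finset.univ.image (SuperGap.tensor a s p)).card = p ^ (a * a) := by
        rw [Finset.card_image_of_injective _ (SuperGap.tensor_inj a s p ha hps has),
          Finset.card_univ]
        simp [ZMod.card, pow_mul]
      rw [← hcard]
      exact Finset.card_le_card hsub
    have h1b : (1 : ℝ) ≤ ((p ^ a : ℕ) : ℝ) := by
      have : 1 ≤ p ^ a := Nat.one_le_iff_ne_zero.mpr (pow_ne_zero a hp.pos.ne')
      exact_mod_cast this
    have h2a : 2 * α ≤ ((a : ℕ) : ℝ) := by
      calc 2 * α ≤ (⌈2 * α⌉₊ : ℝ) := Nat.le_ceil _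
        _ ≤ (a : ℝ) := by exact_mod_cast Nat.cast_le.mpr (le_max_right 1 (⌈2 * α⌉₊))
    calc ((p ^ a : ℕ) : ℝ) ^ (2 * α) ≤ ((p ^ a : ℕ) : ℝ) ^ ((a : ℕ) : ℝ) :=
          Real.rpow_le_rpow_of_exponent_le h1b h2a
      _ = (((p ^ a) ^ a : ℕ) : ℝ) := by
          rw [Real.rpow_natCast]
          push_cast
          ring
      _ = ((p ^ (a * a) : ℕ) : ℝ) := by rw [← pow_mul]
      _ ≤ _ := by exact_mod_cast hcount
end

section
/- Let Q be a conjunctive query over a finite variable set V with body atoms u_1,…,u_m (m ≥ 2) and FD set Φ. Suppose that for each j ∈ {1,…,m} there exist a valid coloring ℒ_j of (V,Φ) and a color c_j with c_j ∈ ℒ_j(vars(u_0)) and c_j ∉ ℒ_j(vars(u_j)). Then there exists a valid coloring ℒ : V → Finset (Fin m) of (V,Φ) with |ℒ(vars(u_0))| = m and |ℒ(vars(u_j))| ≤ m − 1 for every j ∈ {1,…,m}; in particular the color number of Q is at least m/(m−1). -/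
/-- Let `Q` be a conjunctive query with body atoms `u 1, …, u m` (`m ≥ 2`) and
FD set `Φ`.  If for each body atom `j` there are a valid coloring `ℒ_j` of `(V, Φ)` (over some
type of colors) and a color `c_j` appearing in the output variables but in no variable of
`u j`, then there is a valid coloring `ℒ : V → Finset (Fin m)` with `|ℒ(vars(u0))| = m` and
`|ℒ(vars(u j))| ≤ m − 1` for every `j`; in particular the color number of `Q` is at least
`m/(m−1)`.  (Validity of a coloring is expressed membership-wise, which avoids any
decidability assumptions on the color types in the hypothesis.) -/
theorem combine_separating_colorings
    {V : Type} [Fintype V] [DecidableEq V]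
    {m : ℕ} (hm : 2 ≤ m)
    {a0 : ℕ} (u0 : Fin a0 → V)
    (a : Fin m → ℕ) (u : (j : Fin m) → Fin (a j) → V)
    (Φ : Set (Finset V × V))
    (hyp : ∀ j : Fin m, ∃ (C : Type) (ℒ : V → Finset C) (c : C),
      (∀ p ∈ Φ, ∀ d ∈ ℒ p.2, ∃ x ∈ p.1, d ∈ ℒ x) ∧
      (∃ x ∈ Finset.univ.image u0, c ∈ ℒ x) ∧
      (∀ x ∈ Finset.univ.image (u j), c ∉ ℒ x)) :
    ∃ ℒ : V → Finset (Fin m),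
      (∀ p ∈ Φ, ℒ p.2 ⊆ p.1.biUnion ℒ) ∧
      ((Finset.univ.image u0).biUnion ℒ).card = m ∧
      ∀ j : Fin m, ((Finset.univ.image (u j)).biUnion ℒ).card ≤ m - 1 := by
  classical
  choose C L c hval hout hnot using hyp
  refine ⟨fun x => Finset.univ.filter (fun j => c j ∈ L j x), ?_, ?_, ?_⟩
  · intro p hp j hj
    simp only [Finset.mem_filter, Finset.mem_univ, true_and] at hj
    obtain ⟨x, hx, hcx⟩ := hval j p hp (c j) hj
    exact Finset.mem_biUnion.2 ⟨x, hx, by simp [hcx]⟩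
  · have : ((Finset.univ.image u0).biUnion
        (fun x => Finset.univ.filter (fun k => c k ∈ L k x))) = Finset.univ := by
      apply Finset.eq_univ_of_forall
      intro j
      obtain ⟨x, hx, hcx⟩ := hout j
      exact Finset.mem_biUnion.2 ⟨x, hx, by simp [hcx]⟩
    rw [this, Finset.card_fin]
  · intro j
    have hsub : (Finset.univ.image (u j)).biUnion
        (fun x => Finset.univ.filter (fun k => c k ∈ L k x)) ⊆ Finset.univ.erase j := by
      intro k hk
      obtain ⟨x, hx, hkx⟩ := Finset.mem_biUnion.1 hk
      simp only [Finset.mem_filter, Finset.mem_univ, true_and] at hkx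
      refine Finset.mem_erase.2 ⟨?_, Finset.mem_univ k⟩
      rintro rfl
      exact hnot k x hx hkx
    calc _ ≤ (Finset.univ.erase j).card := Finset.card_le_card hsub
      _ = m - 1 := by rw [Finset.card_erase_of_mem (Finset.mem_univ j), Finset.card_fin]
end

section
/- Let V be a finite variable set, Φ a set of functional dependencies over V, and W, W' ⊆ V. The following are equivalent: (1) there exist a valid coloring ℒ of (V,Φ) and a color c such that c ∈ ⋃_{x∈W} ℒ(x) but c ∉ ⋃_{x∈W'} ℒ(x); (2) W is not contained in cl_Φ(W'). -/
/-- The FD-closure `cl_Φ(A)`: `x` belongs to the closure iff `x` belongs to every set `B ⊇ A`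
that is closed under all functional dependencies of `Φ` (this is membership in the smallest
such set, since the intersection of closed supersets of `A` is again a closed superset). -/
def fdClosure {V : Type} [DecidableEq V]
    (Φ : Set (Finset V × V)) (A : Finset V) : Set V :=
  {x | ∀ B : Finset V, A ⊆ B → (∀ p ∈ Φ, p.1 ⊆ B → p.2 ∈ B) → x ∈ B}

/-- For a finite variable set `V`, a set `Φ` of functional dependencies and
`W, W' ⊆ V`, the following are equivalent: (1) some valid coloring of `(V, Φ)` has a color
appearing in `W` but not in `W'`; (2) `W` is not contained in `cl_Φ(W')`. -/
theorem coloring_separation_iff_not_in_closure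
    {V : Type} [Fintype V] [DecidableEq V]
    (Φ : Set (Finset V × V)) (W W' : Finset V) :
    (∃ (C : Type) (ℒ : V → Finset C) (c : C),
      (∀ p ∈ Φ, ∀ d ∈ ℒ p.2, ∃ x ∈ p.1, d ∈ ℒ x) ∧
      (∃ x ∈ W, c ∈ ℒ x) ∧ (∀ x ∈ W', c ∉ ℒ x)) ↔
    ¬ (↑W ⊆ fdClosure Φ W') := by
  classical
  constructor
  · rintro ⟨C, ℒ, c, hvalid, ⟨x, hxW, hxc⟩, hW'⟩ hsub
    set B : Finset V := Finset.univ.filter (fun v => c ∉ ℒ v) with hB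
    have hxB : x ∈ B := hsub hxW B
      (fun v hv => Finset.mem_filter.2 ⟨Finset.mem_univ _, hW' v hv⟩)
      (by
        intro p hp hp1
        refine Finset.mem_filter.2 ⟨Finset.mem_univ _, fun hc => ?_⟩
        obtain ⟨y, hy, hyc⟩ := hvalid p hp c hc
        exact (Finset.mem_filter.1 (hp1 hy)).2 hyc)
    exact (Finset.mem_filter.1 hxB).2 hxc
  · intro hnsub
    obtain ⟨x, hxW, hxcl⟩ : ∃ x ∈ W, x ∉ fdClosure Φ W' := by
      by_contra h
      push_neg at h
      exact hnsub (fun v hv => h v hv)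
    refine ⟨Unit, fun v => if v ∈ fdClosure Φ W' then ∅ else {()}, (), ?_, ?_, ?_⟩
    · intro p hp d hd
      by_cases h2 : p.2 ∈ fdClosure Φ W'
      · simp [h2] at hd
      · by_contra hall
        push_neg at hall
        apply h2
        intro B hWB hcl
        refine hcl p hp ?_
        intro y hy
        have := hall y hy
        have hycl : y ∈ fdClosure Φ W' := by
          by_contra hy'
          simp [hy'] at this
        exact hycl B hWB hcl
    · exact ⟨x, hxW, by simp [hxcl]⟩
    · intro v hv
      have : v ∈ fdClosure Φ W' := fun B hWB _ => hWB hv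
      simp [this]
end

section
/- Let Q be a conjunctive query over a finite variable set V with body atoms u_1,…,u_m and FD set Φ, and suppose vars(u_0) ⊆ cl_Φ(vars(u_j)) for some body atom j. Then every database D over a finite universe compatible with Φ satisfies |Q(D)| ≤ |R_{σ(j)}| ≤ rmax(Q,D); that is, Q is sparsity preserving. -/
/-- If `vars(u0) ⊆ cl_Φ(vars(u j))` for some body atom `j`, then every
database `D` over a finite universe compatible with `Φ` satisfies
`|Q(D)| ≤ |R (σ j)| ≤ rmax(Q, D)`; that is, `Q` is sparsity preserving. -/
theorem sparsity_preserving_of_output_in_closure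
    {V : Type} [Fintype V] [DecidableEq V]
    {n m : ℕ}
    {a0 : ℕ} (u0 : Fin a0 → V)
    (ar : Fin n → ℕ) (σ : Fin m → Fin n)
    (u : (j : Fin m) → Fin (ar (σ j)) → V)
    (Φ : Set (Finset V × V))
    (j : Fin m)
    (hcl : ↑(Finset.univ.image u0) ⊆ fdClosure Φ (Finset.univ.image (u j)))
    {U : Type} [Fintype U] [DecidableEq U]
    (R : (i : Fin n) → Finset (Fin (ar i) → U))
    (hcompat : ∀ p ∈ Φ, ∀ θ θ' : V → U,
      (∀ j', θ ∘ u j' ∈ R (σ j')) → (∀ j', θ' ∘ u j' ∈ R (σ j')) →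
      (∀ x ∈ p.1, θ x = θ' x) → θ p.2 = θ' p.2) :
    ((Finset.univ.filter (fun θ : V → U => ∀ j', θ ∘ u j' ∈ R (σ j'))).image
        (fun θ => θ ∘ u0)).card ≤ (R (σ j)).card ∧
    (R (σ j)).card ≤ Finset.univ.sup (fun i => (R i).card) := by
  constructor
  · -- key: body-satisfying θ, θ' agreeing on u j agree on u0
    have key : ∀ θ θ' : V → U, (∀ j', θ ∘ u j' ∈ R (σ j')) →
        (∀ j', θ' ∘ u j' ∈ R (σ j')) → θ ∘ u j = θ' ∘ u j → θ ∘ u0 = θ' ∘ u0 := by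
      intro θ θ' hθ hθ' hagree
      funext i
      have hx : u0 i ∈ fdClosure Φ (Finset.univ.image (u j)) := by
        apply hcl
        simp [Finset.mem_image]
      have := hx (Finset.univ.filter (fun x => θ x = θ' x))
        (by
          intro x hxmem
          simp only [Finset.mem_image] at hxmem
          obtain ⟨k, -, rfl⟩ := hxmem
          simp only [Finset.mem_filter, Finset.mem_univ, true_and]
          exact congrFun hagree k)
        (by
          intro p hp hsub
          simp only [Finset.mem_filter, Finset.mem_univ, true_and]
          exact hcompat p hp θ θ' hθ hθ' (fun x hx => by
            have := hsub hx
            simpa using this))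
      simpa using this
    set S := Finset.univ.filter (fun θ : V → U => ∀ j', θ ∘ u j' ∈ R (σ j')) with hS
    rcases S.eq_empty_or_nonempty with hE | ⟨θ0, hθ0⟩
    · simp [hE]
    · have hθ0' : ∀ j', θ0 ∘ u j' ∈ R (σ j') := by
        simpa [hS] using hθ0
      classical
      refine Finset.card_le_card_of_surjOn
        (fun t => if h : ∃ θ ∈ S, θ ∘ u j = t then h.choose ∘ u0 else θ0 ∘ u0) ?_
      intro b hb
      simp only [Finset.coe_image, Set.mem_image, Finset.mem_coe] at hb
      obtain ⟨θ, hθ, rfl⟩ := hb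
      have hθ' : ∀ j', θ ∘ u j' ∈ R (σ j') := by simpa [hS] using hθ
      refine ⟨θ ∘ u j, hθ' j, ?_⟩
      have hex : ∃ θ' ∈ S, θ' ∘ u j = θ ∘ u j := ⟨θ, hθ, rfl⟩
      simp only [hex, dif_pos]
      obtain ⟨hmem, heq⟩ := hex.choose_spec
      exact key _ _ (by simpa [hS] using hmem) hθ' heq
  · exact Finset.le_sup (f := fun i => (R i).card) (Finset.mem_univ (σ j))
end

section
/- Let V be a finite type of cardinality k, and let h : Finset V → ℝ satisfy h(∅) = 0. Then for every W ⊆ V, h(W) = ∑_{S} I_h(S), where the sum ranges over all nonempty S ⊆ V with S ∩ W ≠ ∅. -/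
/-!
Summing `I_h` over the subsets of `X` gives `-h(Xᶜ)`, by induction on `X` with `h` generalised:
adding a point `a ∉ S` turns `I_h(S)` into `I_{h'}(S) - I_h(S)` with `h' U = h (U.erase a)`, so
the sums over `S ⊆ X` and `S ⊆ insert a X` telescope. Taking `X = univ` and `X = Wᶜ` (and
`h ∅ = 0`), the sum over the sets meeting `W` is `0 - (-h W)`.
-/

open Finset

section

variable {V : Type} [Fintype V] [DecidableEq V]

lemma signedAtomMeasure_insert (h : Finset V → ℝ) {a : V} {S : Finset V} (ha : a ∉ S) :
    signedAtomMeasure h (insert a S) =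
      signedAtomMeasure (fun U => h (U.erase a)) S - signedAtomMeasure h S := by
  rw [signedAtomMeasure, sum_powerset_insert ha, signedAtomMeasure, signedAtomMeasure,
    ← sum_sub_distrib (G := ℝ), ← sum_add_distrib]
  refine sum_congr rfl fun T hT => ?_
  have haT : a ∉ T := fun haT => ha (mem_powerset.mp hT haT)
  have hwith : insert a T ∪ (insert a S)ᶜ = T ∪ Sᶜ := by
    ext x; by_cases hx : x = a <;> simp [hx, ha]
  have hwithout : T ∪ (insert a S)ᶜ = (T ∪ Sᶜ).erase a := by
    ext x; by_cases hx : x = a <;> simp [hx, haT]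
  rw [hwith, hwithout, card_insert_of_notMem haT, pow_succ]
  ring

lemma sum_powerset_signedAtomMeasure (h : Finset V → ℝ) (X : Finset V) :
    ∑ S ∈ X.powerset, signedAtomMeasure h S = -h Xᶜ := by
  induction X using Finset.induction_on generalizing h with
  | empty => simp [signedAtomMeasure]
  | insert a X ha ih =>
    have hstep : ∀ S ∈ X.powerset, signedAtomMeasure h (insert a S) =
        signedAtomMeasure (fun U => h (U.erase a)) S - signedAtomMeasure h S :=
      fun S hS => signedAtomMeasure_insert h fun haS => ha (mem_powerset.mp hS haS)
    rw [sum_powerset_insert ha, sum_congr rfl hstep, sum_sub_distrib, add_sub_cancel, ih,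
      compl_insert]

end

theorem entropy_eq_sum_of_atoms_general
    {V : Type} [Fintype V] [DecidableEq V]
    (h : Finset V → ℝ) (h0 : h ∅ = 0) (W : Finset V) :
    h W = ∑ S ∈ Finset.univ.powerset.filter
        (fun S => S.Nonempty ∧ (S ∩ W).Nonempty), signedAtomMeasure h S := by
  have hmeets : univ.powerset.filter (fun S => S.Nonempty ∧ (S ∩ W).Nonempty) =
      univ.powerset \ Wᶜ.powerset := by
    ext S
    simp only [mem_filter, mem_sdiff, mem_powerset, subset_univ, true_and,
      subset_compl_iff_disjoint_right, disjoint_iff_inter_eq_empty, ← not_nonempty_iff_eq_empty,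
      not_not, and_iff_right_iff_imp]
    exact fun hSW => hSW.mono inter_subset_left
  have hsplit := sum_sdiff (f := signedAtomMeasure h) (powerset_mono.mpr (subset_univ Wᶜ))
  rw [sum_powerset_signedAtomMeasure, sum_powerset_signedAtomMeasure, compl_compl, compl_univ,
    h0] at hsplit
  rw [hmeets]
  linarith

/-- Let `V` be a finite type of cardinality `k` and `h : Finset V → ℝ` with
`h(∅) = 0`.  Then for every `W ⊆ V`, `h(W) = ∑_S I_h(S)`, the sum over all nonempty `S ⊆ V`
with `S ∩ W ≠ ∅`. -/
theorem entropy_eq_sum_of_atoms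
    {V : Type} [Fintype V] [DecidableEq V] {k : ℕ} (hk : Fintype.card V = k)
    (h : Finset V → ℝ) (h0 : h ∅ = 0) (W : Finset V) :
    h W = ∑ S ∈ Finset.univ.powerset.filter
        (fun S => S.Nonempty ∧ (S ∩ W).Nonempty), signedAtomMeasure h S :=
  entropy_eq_sum_of_atoms_general h h0 W
end

section
/- Let V be a finite type, h : Finset V → ℝ, let x, y ∈ V be distinct, and let W ⊆ V \ {x,y}. Then h(W ∪ {x}) + h(W ∪ {y}) − h(W) − h(W ∪ {x,y}) = ∑_{S} I_h(S), where the sum ranges over all S ⊆ V with {x,y} ⊆ S and S ∩ W = ∅. -/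
private lemma atom_sum_general {V : Type} [Fintype V] [DecidableEq V]
    (h : Finset V → ℝ) :
    ∀ (n : ℕ) (Z W : Finset V), Disjoint Z W → ((Z ∪ W)ᶜ).card = n →
      ∑ S ∈ Finset.univ.powerset.filter
        (fun S => Z ⊆ S ∧ Disjoint S W), signedAtomMeasure h S
      = ∑ T ∈ Z.powerset, (-1 : ℝ) ^ (T.card + 1) * h (T ∪ W) := by
  intro n
  induction n with
  | zero =>
    intro Z W hZW hcard
    have huniv : Z ∪ W = Finset.univ := by
      have h0 : (Z ∪ W)ᶜ = ∅ := Finset.card_eq_zero.mp hcard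
      have := congrArg (·ᶜ) h0
      simpa using this
    have hZc : Zᶜ = W := by
      apply Finset.eq_of_subset_of_card_le
      · intro a ha
        have : a ∈ Z ∪ W := huniv ▸ Finset.mem_univ a
        rcases Finset.mem_union.mp this with h' | h'
        · exact absurd h' (Finset.mem_compl.mp ha)
        · exact h'
      · have h1 : Z.card + W.card = Fintype.card V := by
          rw [← Finset.card_union_of_disjoint hZW, huniv, Finset.card_univ]
        have h2 : Zᶜ.card = Fintype.card V - Z.card := Finset.card_compl Z
        omega
    have hfil : Finset.univ.powerset.filter
        (fun S => Z ⊆ S ∧ Disjoint S W) = {Z} := by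
      apply Finset.eq_singleton_iff_unique_mem.mpr
      constructor
      · simp [Finset.mem_filter, hZW]
      · intro S hS
        rw [Finset.mem_filter] at hS
        obtain ⟨-, hZS, hSW⟩ := hS
        apply Finset.Subset.antisymm _ hZS
        intro a ha
        by_contra haZ
        have : a ∈ W := by
          have : a ∈ Z ∪ W := huniv ▸ Finset.mem_univ a
          rcases Finset.mem_union.mp this with h' | h'
          · exact absurd h' haZ
          · exact h'
        exact (Finset.disjoint_left.mp hSW ha) this
    rw [hfil, Finset.sum_singleton, signedAtomMeasure, hZc]
  | succ n ih =>
    intro Z W hZW hcard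
    have hz : ∃ z, z ∈ (Z ∪ W)ᶜ := Finset.card_pos.mp (by omega) |>.exists_mem
    obtain ⟨z, hz⟩ := hz
    rw [Finset.mem_compl, Finset.mem_union] at hz
    push_neg at hz
    obtain ⟨hzZ, hzW⟩ := hz
    -- split the sum by whether z ∈ S
    rw [← Finset.sum_filter_add_sum_filter_not
      (Finset.univ.powerset.filter (fun S => Z ⊆ S ∧ Disjoint S W))
      (fun S => z ∈ S), Finset.filter_filter, Finset.filter_filter]
    have e1 : Finset.univ.powerset.filter (fun S => (Z ⊆ S ∧ Disjoint S W) ∧ z ∈ S)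
        = Finset.univ.powerset.filter (fun S => insert z Z ⊆ S ∧ Disjoint S W) := by
      apply Finset.filter_congr
      intro S _
      simp only [Finset.insert_subset_iff]
      tauto
    have e2 : Finset.univ.powerset.filter (fun S => (Z ⊆ S ∧ Disjoint S W) ∧ ¬ z ∈ S)
        = Finset.univ.powerset.filter (fun S => Z ⊆ S ∧ Disjoint S (insert z W)) := by
      apply Finset.filter_congr
      intro S _
      simp only [Finset.disjoint_insert_right]
      tauto
    have hc1 : ((insert z Z ∪ W)ᶜ).card = n := by
      have : insert z Z ∪ W = insert z (Z ∪ W) := by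
        simp [Finset.insert_union]
      rw [this, Finset.compl_insert,
        Finset.card_erase_of_mem (by simp [Finset.mem_compl, hzZ, hzW]), hcard]
      rfl
    have hc2 : ((Z ∪ insert z W)ᶜ).card = n := by
      have : Z ∪ insert z W = insert z (Z ∪ W) := by
        simp [Finset.union_insert]
      rw [this, Finset.compl_insert,
        Finset.card_erase_of_mem (by simp [Finset.mem_compl, hzZ, hzW]), hcard]
      rfl
    have hd1 : Disjoint (insert z Z) W := by
      simp [Finset.disjoint_insert_left, hzW, hZW]
    have hd2 : Disjoint Z (insert z W) := by
      simp [Finset.disjoint_insert_right, hzZ, hZW]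
    rw [e1, e2, ih _ _ hd1 hc1, ih _ _ hd2 hc2,
      Finset.sum_powerset_insert hzZ]
    have e3 : ∀ T ∈ Z.powerset,
        (-1 : ℝ) ^ ((insert z T).card + 1) * h (insert z T ∪ W)
        = -((-1 : ℝ) ^ (T.card + 1) * h (T ∪ insert z W)) := by
      intro T hT
      have hzT : z ∉ T := fun hmem => hzZ (Finset.mem_powerset.mp hT hmem)
      rw [Finset.card_insert_of_notMem hzT, Finset.insert_union, Finset.union_insert]
      ring
    rw [Finset.sum_congr rfl e3, Finset.sum_neg_distrib]
    ring

/-- Let `V` be a finite type, `h : Finset V → ℝ`, `x ≠ y` in `V`, and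
`W ⊆ V \ {x,y}`.  Then the Shannon conditional-mutual-information expression
`h(W ∪ {x}) + h(W ∪ {y}) − h(W) − h(W ∪ {x,y})` equals `∑_S I_h(S)`, the sum over all
`S ⊆ V` with `{x,y} ⊆ S` and `S ∩ W = ∅`. -/
theorem cmi_eq_sum_of_atoms
    {V : Type} [Fintype V] [DecidableEq V]
    (h : Finset V → ℝ) (x y : V) (hxy : x ≠ y)
    (W : Finset V) (hW : W ⊆ ({x, y} : Finset V)ᶜ) :
    h (insert x W) + h (insert y W) - h W - h (insert x (insert y W)) =
      ∑ S ∈ Finset.univ.powerset.filter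
        (fun S => ({x, y} : Finset V) ⊆ S ∧ Disjoint S W), signedAtomMeasure h S := by
  have hd : Disjoint ({x, y} : Finset V) W := by
    rw [Finset.disjoint_left]
    intro a ha haW
    exact (Finset.mem_compl.mp (hW haW)) ha
  rw [atom_sum_general h _ ({x, y} : Finset V) W hd rfl]
  have hxny : x ∉ ({y} : Finset V) := by simp [hxy]
  have hps : ({y} : Finset V).powerset = {∅, {y}} := by
    rw [show ({y} : Finset V) = insert y ∅ from rfl, Finset.powerset_insert]
    rfl
  rw [show ({x, y} : Finset V) = insert x {y} from rfl,
    Finset.sum_powerset_insert hxny, hps,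
    Finset.sum_pair ((Finset.singleton_ne_empty y).symm : (∅ : Finset V) ≠ {y}),
    Finset.sum_pair ((Finset.singleton_ne_empty y).symm : (∅ : Finset V) ≠ {y})]
  have hsu : ∀ (a : V) (s : Finset V), ({a} : Finset V) ∪ s = insert a s := fun a s => by
    rw [show ({a} : Finset V) = insert a ∅ from rfl, Finset.insert_union, Finset.empty_union]
  simp [Finset.card_insert_of_notMem, hxy, Finset.insert_union, hsu]
  ring
end

section
/- Let Q be a conjunctive query over a finite variable set V with body atoms u_1,…,u_m and FD set Φ, and let s ≥ 0 be a real number such that every Shannon-feasible function h for (Q,Φ) satisfies h(vars(u_0)) ≤ s. Then every valid coloring ℒ of (V,Φ) satisfies |ℒ(vars(u_0))| ≤ s · max_{1≤j≤m} |ℒ(vars(u_j))|; that is, the color number of Q is at most the value of the Shannon linear program. -/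
/-!
Scaling the color count of a valid coloring gives Shannon-feasible functions: `S ↦ t · |ℒ(S)|`
vanishes on `∅`, is monotone and submodular (it is a coverage function), and validity of `ℒ` is
exactly what makes it constant along the FDs. Choosing `t = 1 / max_j |ℒ(vars(u_j))|` meets the
atom constraints, so the LP bound `s` applies to `|ℒ(vars(u_0))| / max_j |ℒ(vars(u_j))|`.
-/

open Finset

/-- The conditions (i)–(iv) of Shannon-feasibility, for body atoms with variable sets `B j`. -/
structure IsShannonFeasible_s18 {V ι : Type*} [Fintype V] [DecidableEq V]
    (B : ι → Finset V) (Φ : Set (Finset V × V)) (h : Finset V → ℝ) : Prop where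
  map_empty : h ∅ = 0
  le_one : ∀ j, h (B j) ≤ 1
  fd : ∀ p ∈ Φ, h (insert p.2 p.1) = h p.1
  univ_sub_compl_nonneg : ∀ x : V, 0 ≤ h univ - h ({x}ᶜ)
  submodular : ∀ x y : V, x ≠ y → ∀ S : Finset V, S ⊆ ({x, y} : Finset V)ᶜ →
    0 ≤ h (insert x S) + h (insert y S) - h S - h (insert x (insert y S))

theorem Finset.card_add_card_union_union_le {α : Type*} [DecidableEq α] (X Y T : Finset α) :
    #T + #(X ∪ (Y ∪ T)) ≤ #(X ∪ T) + #(Y ∪ T) := by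
  have hunion : (X ∪ T) ∪ (Y ∪ T) = X ∪ (Y ∪ T) := by
    rw [union_union_union_comm, union_idempotent, union_assoc]
  have hinter : T ⊆ (X ∪ T) ∩ (Y ∪ T) :=
    subset_inter subset_union_right subset_union_right
  have hcard := card_union_add_card_inter (X ∪ T) (Y ∪ T)
  rw [hunion] at hcard
  have hT := card_le_card hinter
  omega

section Coloring

variable {V C : Type*} [DecidableEq V] [DecidableEq C] (ℒ : V → Finset C)

theorem biUnion_insert_eq_of_subset {A : Finset V} {y : V} (hy : ℒ y ⊆ A.biUnion ℒ) :
    (insert y A).biUnion ℒ = A.biUnion ℒ := by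
  rw [biUnion_insert, union_eq_right.mpr hy]

theorem card_biUnion_insert_insert_le (x y : V) (S : Finset V) :
    #(S.biUnion ℒ) + #((insert x (insert y S)).biUnion ℒ) ≤
      #((insert x S).biUnion ℒ) + #((insert y S).biUnion ℒ) := by
  simp only [biUnion_insert]
  exact card_add_card_union_union_le _ _ _

theorem isShannonFeasible_mul_card_biUnion [Fintype V] {ι : Type*} {B : ι → Finset V}
    {Φ : Set (Finset V × V)} (hvalid : ∀ p ∈ Φ, ℒ p.2 ⊆ p.1.biUnion ℒ) {t : ℝ} (ht : 0 ≤ t)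
    (hB : ∀ j, t * #((B j).biUnion ℒ) ≤ 1) :
    IsShannonFeasible_s18 B Φ (fun S => t * #(S.biUnion ℒ)) where
  map_empty := by simp
  le_one := hB
  fd p hp := by simp only [biUnion_insert_eq_of_subset ℒ (hvalid p hp)]
  univ_sub_compl_nonneg x := by
    have hmono : (#(({x}ᶜ : Finset V).biUnion ℒ) : ℝ) ≤ #((univ : Finset V).biUnion ℒ) := by
      exact_mod_cast card_le_card (biUnion_subset_biUnion_of_subset_left ℒ (subset_univ _))
    rw [← mul_sub]
    exact mul_nonneg ht (sub_nonneg.mpr hmono)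
  submodular x y _ S _ := by
    have hsub : (#(S.biUnion ℒ) : ℝ) + #((insert x (insert y S)).biUnion ℒ) ≤
        #((insert x S).biUnion ℒ) + #((insert y S).biUnion ℒ) := by
      exact_mod_cast card_biUnion_insert_insert_le ℒ x y S
    nlinarith

end Coloring

theorem le_mul_of_forall_mul_le_one {c M s : ℝ} (hM : 0 ≤ M)
    (h : ∀ t, 0 ≤ t → t * M ≤ 1 → t * c ≤ s) : c ≤ s * M := by
  rcases hM.eq_or_lt with hM0 | hMpos
  · subst hM0
    have hs : 0 ≤ s := by simpa using h 0 le_rfl (by simp)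
    by_contra! hc
    rw [mul_zero] at hc
    have := h ((s + 1) / c) (by positivity) (by simp)
    rw [div_mul_cancel₀ _ hc.ne'] at this
    linarith
  · have := h M⁻¹ (inv_nonneg.mpr hM) (inv_mul_cancel₀ hMpos.ne').le
    rwa [inv_mul_le_iff₀ hMpos, mul_comm] at this

theorem color_number_le_shannon_LP_general
    {V : Type} [Fintype V] [DecidableEq V]
    {m : ℕ}
    {a0 : ℕ} (u0 : Fin a0 → V)
    (a : Fin m → ℕ) (u : (j : Fin m) → Fin (a j) → V)
    (Φ : Set (Finset V × V))
    (s : ℝ)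
    (hLP : ∀ h : Finset V → ℝ,
      h ∅ = 0 →
      (∀ j : Fin m, h (Finset.univ.image (u j)) ≤ 1) →
      (∀ p ∈ Φ, h (insert p.2 p.1) = h p.1) →
      (∀ x : V, 0 ≤ h Finset.univ - h (({x} : Finset V)ᶜ)) →
      (∀ x y : V, x ≠ y → ∀ S : Finset V, S ⊆ ({x, y} : Finset V)ᶜ →
        0 ≤ h (insert x S) + h (insert y S) - h S - h (insert x (insert y S))) →
      h (Finset.univ.image u0) ≤ s)
    {C : Type} [DecidableEq C] (ℒ : V → Finset C)
    (hvalid : ∀ p ∈ Φ, ℒ p.2 ⊆ p.1.biUnion ℒ) :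
    ((((Finset.univ.image u0).biUnion ℒ).card : ℕ) : ℝ) ≤
      s * ((Finset.univ.sup
        (fun j => ((Finset.univ.image (u j)).biUnion ℒ).card) : ℕ) : ℝ) := by
  refine le_mul_of_forall_mul_le_one (Nat.cast_nonneg _) fun t ht htM => ?_
  have hatoms : ∀ j, t * #((univ.image (u j)).biUnion ℒ) ≤ 1 := fun j =>
    (mul_le_mul_of_nonneg_left
      (by exact_mod_cast le_sup (f := fun j => #((univ.image (u j)).biUnion ℒ)) (mem_univ j))
      ht).trans htM
  have hfeas := isShannonFeasible_mul_card_biUnion ℒ hvalid ht hatoms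
  exact hLP (fun S => t * #(S.biUnion ℒ)) hfeas.map_empty hfeas.le_one hfeas.fd hfeas.univ_sub_compl_nonneg hfeas.submodular

/-- Let `Q` be a conjunctive query with body atoms `u 1, …, u m` and FD set
`Φ`, and let `s` be a real number such that every Shannon-feasible function `h` for `(Q, Φ)`
satisfies `h(vars(u0)) ≤ s`.  Then every valid coloring `ℒ` of `(V, Φ)` satisfies
`|ℒ(vars(u0))| ≤ s * max_j |ℒ(vars(u j))|`; that is, the color number of `Q` is at most the
value of the Shannon linear program. -/
theorem color_number_le_shannon_LP
    {V : Type} [Fintype V] [DecidableEq V]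
    {m : ℕ} (hm : 1 ≤ m)
    {a0 : ℕ} (u0 : Fin a0 → V)
    (a : Fin m → ℕ) (u : (j : Fin m) → Fin (a j) → V)
    (Φ : Set (Finset V × V))
    (s : ℝ)
    (hLP : ∀ h : Finset V → ℝ,
      h ∅ = 0 →
      (∀ j : Fin m, h (Finset.univ.image (u j)) ≤ 1) →
      (∀ p ∈ Φ, h (insert p.2 p.1) = h p.1) →
      (∀ x : V, 0 ≤ h Finset.univ - h (({x} : Finset V)ᶜ)) →
      (∀ x y : V, x ≠ y → ∀ S : Finset V, S ⊆ ({x, y} : Finset V)ᶜ →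
        0 ≤ h (insert x S) + h (insert y S) - h S - h (insert x (insert y S))) →
      h (Finset.univ.image u0) ≤ s)
    {C : Type} [DecidableEq C] (ℒ : V → Finset C)
    (hvalid : ∀ p ∈ Φ, ℒ p.2 ⊆ p.1.biUnion ℒ) :
    ((((Finset.univ.image u0).biUnion ℒ).card : ℕ) : ℝ) ≤
      s * ((Finset.univ.sup
        (fun j => ((Finset.univ.image (u j)).biUnion ℒ).card) : ℕ) : ℝ) :=
  color_number_le_shannon_LP_general u0 a u Φ s hLP ℒ hvalid
end
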